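/- arXiv:1607.00473 — 8 statements merged into one kernel-verified Lean document; each statement's English description precedes it below -/
import Mathlib

section
/- Let G be a connected bipartite simple graph on n vertices with maximum degree Δ ≤ n−2, and let S = Σ_{i=1}^n Tr_G(v_i). For every vertex v of G with deg(v) = Δ, putting D_v = Tr_G(v), a = (Δ+1)(S − 2D_v − 2 t_v Δ) + 2nΔ² and b = D_v² − 2SΔ² + 2 D_v t_v Δ + t_v² Δ², one has S_𝒟(G) ≥ √(a² + 4b(1+Δ)(n−Δ−1)) / ((1+Δ)(n−Δ−1)). -/
open Finset Matrix

noncomputable def distMatrix {V : Type*} [Fintype V] (G : SimpleGraph V) : Matrix V V ℝ :=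
  Matrix.of fun u v => (G.dist u v : ℝ)

theorem distMatrix_isHermitian {V : Type*} [Fintype V] (G : SimpleGraph V) :
    (distMatrix G).IsHermitian := by
  show (distMatrix G)ᴴ = distMatrix G
  ext i j
  simp [distMatrix, Matrix.conjTranspose_apply, SimpleGraph.dist_comm]

noncomputable def transmission {V : Type*} [Fintype V] (G : SimpleGraph V) (v : V) : ℝ :=
  ∑ u, (G.dist v u : ℝ)

noncomputable def distSLMatrix {V : Type*} [Fintype V] [DecidableEq V] (G : SimpleGraph V) :
    Matrix V V ℝ :=
  Matrix.diagonal (transmission G) + distMatrix G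

theorem distSLMatrix_isHermitian {V : Type*} [Fintype V] [DecidableEq V] (G : SimpleGraph V) :
    (distSLMatrix G).IsHermitian :=
  (Matrix.isHermitian_diagonal _).add (distMatrix_isHermitian G)

noncomputable def maxEig {V : Type*} [Fintype V] [DecidableEq V] {A : Matrix V V ℝ}
    (hA : A.IsHermitian) : ℝ :=
  ⨆ i, hA.eigenvalues i

noncomputable def minEig {V : Type*} [Fintype V] [DecidableEq V] {A : Matrix V V ℝ}
    (hA : A.IsHermitian) : ℝ :=
  ⨅ i, hA.eigenvalues i

noncomputable def distSpread {V : Type*} [Fintype V] [DecidableEq V] (G : SimpleGraph V) : ℝ :=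
  maxEig (distMatrix_isHermitian G) - minEig (distMatrix_isHermitian G)

noncomputable def distSLSpread {V : Type*} [Fintype V] [DecidableEq V] (G : SimpleGraph V) : ℝ :=
  maxEig (distSLMatrix_isHermitian G) - minEig (distSLMatrix_isHermitian G)

/-! ### Auxiliary lemmas -/

lemma rayleigh_bounds {V : Type*} [Fintype V] [DecidableEq V] [Nonempty V] {A : Matrix V V ℝ}
    (hA : A.IsHermitian) (x : V → ℝ) :
    minEig hA * (x ⬝ᵥ x) ≤ x ⬝ᵥ A *ᵥ x ∧ x ⬝ᵥ A *ᵥ x ≤ maxEig hA * (x ⬝ᵥ x) := by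
  classical
  set U : Matrix V V ℝ := (hA.eigenvectorUnitary : Matrix V V ℝ) with hU
  set y : V → ℝ := star U *ᵥ x with hy
  have hUU : U * star U = 1 := (Matrix.mem_unitaryGroup_iff).mp hA.eigenvectorUnitary.2
  have key : x ⬝ᵥ A *ᵥ x = ∑ i, hA.eigenvalues i * (y i)^2 := by
    conv_lhs => rw [hA.spectral_theorem, Unitary.conjStarAlgAut_apply]
    have h1 : (U * diagonal (RCLike.ofReal ∘ hA.eigenvalues) * star U) *ᵥ x
        = U *ᵥ (diagonal (RCLike.ofReal ∘ hA.eigenvalues) *ᵥ y) := by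
      rw [hy, mulVec_mulVec, mulVec_mulVec]
    rw [h1, dotProduct_mulVec, ← mulVec_transpose]
    have h2 : Uᵀ = star U := by
      ext i j; simp [Matrix.star_apply, Matrix.transpose_apply]
    rw [h2, ← hy]
    simp only [dotProduct, mulVec_diagonal, Function.comp_apply, RCLike.ofReal_real_eq_id, id]
    apply Finset.sum_congr rfl
    intro i _
    ring
  have norm_eq : y ⬝ᵥ y = x ⬝ᵥ x := by
    rw [hy, dotProduct_mulVec, ← mulVec_transpose]
    have h2 : (star U)ᵀ = U := by
      ext i j; simp [Matrix.star_apply, Matrix.transpose_apply]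
    rw [h2, mulVec_mulVec, hUU, one_mulVec]
  have hyy : x ⬝ᵥ x = ∑ i, (y i)^2 := by
    rw [← norm_eq]; simp [dotProduct, sq]
  have hbdd : BddAbove (Set.range hA.eigenvalues) := Set.Finite.bddAbove (Set.finite_range _)
  have hbdd' : BddBelow (Set.range hA.eigenvalues) := Set.Finite.bddBelow (Set.finite_range _)
  constructor
  · rw [key, hyy, Finset.mul_sum]
    apply Finset.sum_le_sum
    intro i _
    have : minEig hA ≤ hA.eigenvalues i := ciInf_le hbdd' i
    nlinarith [sq_nonneg (y i)]
  · rw [key, hyy, Finset.mul_sum]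
    apply Finset.sum_le_sum
    intro i _
    have : hA.eigenvalues i ≤ maxEig hA := le_ciSup hbdd i
    nlinarith [sq_nonneg (y i)]

lemma dot_expand {V : Type*} [Fintype V] (c s c' s' : ℝ) (u1 u2 w1 w2 : V → ℝ) :
    (c • u1 + s • u2) ⬝ᵥ (c' • w1 + s' • w2)
      = c*c'*(u1 ⬝ᵥ w1) + c*s'*(u1 ⬝ᵥ w2) + s*c'*(u2 ⬝ᵥ w1) + s*s'*(u2 ⬝ᵥ w2) := by
  simp only [dotProduct_add, add_dotProduct, smul_dotProduct, dotProduct_smul, smul_eq_mul]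
  ring

lemma dot_mulVec_expand {V : Type*} [Fintype V] (A : Matrix V V ℝ) (c s c' s' : ℝ)
    (u1 u2 w1 w2 : V → ℝ) :
    (c • u1 + s • u2) ⬝ᵥ A *ᵥ (c' • w1 + s' • w2)
      = c*c'*(u1 ⬝ᵥ A *ᵥ w1) + c*s'*(u1 ⬝ᵥ A *ᵥ w2) + s*c'*(u2 ⬝ᵥ A *ᵥ w1)
        + s*s'*(u2 ⬝ᵥ A *ᵥ w2) := by
  simp only [mulVec_add, mulVec_smul, dotProduct_add, add_dotProduct, smul_dotProduct,
    dotProduct_smul, smul_eq_mul]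
  ring

lemma spread_ge_compression {V : Type*} [Fintype V] [DecidableEq V] [Nonempty V]
    {A : Matrix V V ℝ} (hA : A.IsHermitian) (e1 e2 : V → ℝ)
    (h11 : e1 ⬝ᵥ e1 = 1) (h22 : e2 ⬝ᵥ e2 = 1) (h12 : e1 ⬝ᵥ e2 = 0) (h21 : e2 ⬝ᵥ e1 = 0)
    {p q r : ℝ} (hp : e1 ⬝ᵥ A *ᵥ e1 = p) (hq : e1 ⬝ᵥ A *ᵥ e2 = q)
    (hq' : e2 ⬝ᵥ A *ᵥ e1 = q) (hr : e2 ⬝ᵥ A *ᵥ e2 = r) :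
    Real.sqrt ((p - r)^2 + 4*q^2) ≤ maxEig hA - minEig hA := by
  set N := Real.sqrt ((p - r)^2 + 4*q^2) with hN
  have hNsq : N^2 = (p - r)^2 + 4*q^2 := Real.sq_sqrt (by positivity)
  have hN0 : 0 ≤ N := Real.sqrt_nonneg _
  rcases eq_or_lt_of_le hN0 with h0 | hNpos
  · rw [← h0]
    have h1 := (rayleigh_bounds hA e1).1
    have h2 := (rayleigh_bounds hA e1).2
    rw [h11, mul_one] at h1 h2
    linarith
  · set u : ℝ := (p - r)/N with hu
    have hu2 : u^2 ≤ 1 := by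
      rw [hu, div_pow]
      rw [div_le_one (by positivity)]
      nlinarith [sq_nonneg q]
    have h1u : 0 ≤ 1 + u := by nlinarith [sq_nonneg (1+u), sq_nonneg (1-u)]
    have h1u' : 0 ≤ 1 - u := by nlinarith
    set c : ℝ := Real.sqrt ((1+u)/2) with hc
    set s0 : ℝ := Real.sqrt ((1-u)/2) with hs0
    set s : ℝ := if 0 ≤ q then s0 else -s0 with hs
    have hc2 : c^2 = (1+u)/2 := Real.sq_sqrt (by linarith)
    have hs02 : s0^2 = (1-u)/2 := Real.sq_sqrt (by linarith)
    have hNne : N ≠ 0 := ne_of_gt hNpos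
    have hs2 : s^2 = (1-u)/2 := by
      rw [hs]; split_ifs
      · exact hs02
      · rw [neg_sq]; exact hs02
    have h1u2 : 1 - u^2 = 4*q^2/N^2 := by
      have h4 : 4*q^2 = N^2 - (p-r)^2 := by linarith
      rw [h4, hu, div_pow, sub_div, div_self (pow_ne_zero 2 hNne)]
    have hcs0 : c * s0 = |q|/N := by
      rw [hc, hs0, ← Real.sqrt_mul (by linarith)]
      have he : (1+u)/2 * ((1-u)/2) = (1 - u^2)/4 := by ring
      rw [he, h1u2, show 4*q^2/N^2/4 = (q/N)^2 by ring, Real.sqrt_sq_eq_abs, abs_div,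
        abs_of_pos hNpos]
    have hcs : c * s = q/N := by
      rw [hs]; split_ifs with hq0
      · rw [hcs0, abs_of_nonneg hq0]
      · rw [mul_neg, hcs0, abs_of_neg (not_le.mp hq0)]; ring
    set x : V → ℝ := c • e1 + s • e2 with hx
    set y : V → ℝ := (-s) • e1 + c • e2 with hy
    have hxx : x ⬝ᵥ x = 1 := by
      rw [hx, dot_expand, h11, h22, h12, h21]
      linear_combination hc2 + hs2
    have hyy : y ⬝ᵥ y = 1 := by
      rw [hy, dot_expand, h11, h22, h12, h21]
      linear_combination hc2 + hs2
    have hRx : x ⬝ᵥ A *ᵥ x = c^2*p + 2*(c*s)*q + s^2*r := by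
      rw [hx, dot_mulVec_expand, hp, hq, hq', hr]; ring
    have hRy : y ⬝ᵥ A *ᵥ y = s^2*p - 2*(c*s)*q + c^2*r := by
      rw [hy, dot_mulVec_expand, hp, hq, hq', hr]; ring
    have hdiff : x ⬝ᵥ A *ᵥ x - y ⬝ᵥ A *ᵥ y = N := by
      rw [hRx, hRy]
      have hcs2 : c^2 - s^2 = u := by rw [hc2, hs2]; ring
      have expand : c^2*p + 2*(c*s)*q + s^2*r - (s^2*p - 2*(c*s)*q + c^2*r)
          = (c^2 - s^2)*(p-r) + 4*(c*s)*q := by ring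
      rw [expand, hcs2, hcs, hu]
      have : (p-r)/N*(p-r) + 4*(q/N)*q = ((p-r)^2 + 4*q^2)/N := by ring
      rw [this, ← hNsq, sq, mul_div_assoc, div_self hNne, mul_one]
    have h1 := (rayleigh_bounds hA x).2
    have h2 := (rayleigh_bounds hA y).1
    rw [hxx, mul_one] at h1
    rw [hyy, mul_one] at h2
    linarith

lemma indicator_dot {V : Type*} [Fintype V] [DecidableEq V] (s t : Finset V) (α β : ℝ) :
    (fun u => if u ∈ s then α else 0) ⬝ᵥ (fun u => if u ∈ t then β else 0)
      = α * β * ((s ∩ t).card : ℝ) := by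
  simp only [dotProduct, ite_mul, mul_ite, zero_mul, mul_zero]
  have : ∀ u : V, (if u ∈ t then if u ∈ s then α * β else 0 else 0)
      = if u ∈ s ∩ t then α * β else 0 := by
    intro u; by_cases h1 : u ∈ s <;> by_cases h2 : u ∈ t <;> simp [h1, h2]
  rw [Finset.sum_congr rfl fun u _ => this u, Finset.sum_ite_mem, Finset.univ_inter,
    Finset.sum_const, nsmul_eq_mul]
  ring

lemma indicator_dot_mulVec {V : Type*} [Fintype V] [DecidableEq V] (A : Matrix V V ℝ)
    (s t : Finset V) (α β : ℝ) :
    (fun u => if u ∈ s then α else 0) ⬝ᵥ A *ᵥ (fun u => if u ∈ t then β else 0)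
      = α * β * ∑ u ∈ s, ∑ w ∈ t, A u w := by
  simp only [dotProduct, mulVec, dotProduct, ite_mul, mul_ite, zero_mul, mul_zero,
    Finset.sum_ite_mem, Finset.univ_inter]
  rw [Finset.mul_sum]
  apply Finset.sum_congr rfl
  intro u _
  rw [Finset.mul_sum, Finset.mul_sum]
  apply Finset.sum_congr rfl
  intro w _
  ring

theorem stmt1 {V : Type*} [Fintype V] [DecidableEq V] (G : SimpleGraph V) [DecidableRel G.Adj]
    (hconn : G.Connected) (hbip : G.Colorable 2)
    (n : ℕ) (hn : n = Fintype.card V)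
    (Δ : ℕ) (hΔ : G.maxDegree = Δ) (hΔn : Δ + 2 ≤ n)
    (S : ℝ) (hS : S = ∑ u, transmission G u)
    (v : V) (hv : G.degree v = Δ)
    (Dv tv a b : ℝ)
    (hDv : Dv = transmission G v)
    (htv : tv = (∑ u ∈ G.neighborFinset v, transmission G u) / Δ)
    (ha : a = (Δ + 1) * (S - 2*Dv - 2*tv*Δ) + 2*n*Δ^2)
    (hb : b = Dv^2 - 2*S*Δ^2 + 2*Dv*tv*Δ + tv^2*Δ^2) :
    Real.sqrt (a^2 + 4*b*(1 + Δ)*(n - Δ - 1)) / ((1 + Δ)*((n : ℝ) - Δ - 1)) ≤ distSpread G := by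
  classical
  haveI : Nonempty V := hconn.nonempty
  have hcard : 1 < Fintype.card V := by omega
  -- Δ ≥ 1
  have hΔ1 : 1 ≤ Δ := by
    obtain ⟨w, hw⟩ := Fintype.exists_ne_of_one_lt_card hcard v
    obtain ⟨pw⟩ := hconn.preconnected v w
    have hadj : ∃ u, G.Adj v u := by
      cases pw with
      | nil => exact absurd rfl hw
      | cons h _ => exact ⟨_, h⟩
    obtain ⟨u, hu⟩ := hadj
    have hdeg : 0 < G.degree v := by
      rw [SimpleGraph.degree_pos_iff_exists_adj]
      exact ⟨u, hu⟩
    omega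
  set NF := G.neighborFinset v with hNF
  set N1 := insert v NF with hN1
  have hvNF : v ∉ NF := SimpleGraph.notMem_neighborFinset_self G v
  have hcardNF : NF.card = Δ := by
    rw [hNF, SimpleGraph.card_neighborFinset_eq_degree]; exact hv
  have hcardN1 : N1.card = Δ + 1 := by
    rw [hN1, Finset.card_insert_of_notMem hvNF, hcardNF]
  have hcardC : ((N1ᶜ.card : ℕ) : ℝ) = (n:ℝ) - Δ - 1 := by
    rw [Finset.card_compl, hcardN1, ← hn, Nat.cast_sub (by omega)]
    push_cast; ring
  -- distance facts
  have hdvu : ∀ u ∈ NF, G.dist v u = 1 := by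
    intro u hu
    exact SimpleGraph.dist_eq_one_iff_adj.mpr ((SimpleGraph.mem_neighborFinset _ _ _).mp hu)
  have hdist2 : ∀ u ∈ NF, ∀ w ∈ NF, u ≠ w → G.dist u w = 2 := by
    intro u hu w hw hne
    have hadju : G.Adj v u := (SimpleGraph.mem_neighborFinset _ _ _).mp hu
    have hadjw : G.Adj v w := (SimpleGraph.mem_neighborFinset _ _ _).mp hw
    have hnadj : ¬ G.Adj u w := by
      intro h
      obtain ⟨Co⟩ := hbip
      have h1 := Co.valid hadju
      have h2 := Co.valid hadjw
      have h3 := Co.valid h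
      have : ∀ a b c : Fin 2, ¬(a ≠ b ∧ a ≠ c ∧ b ≠ c) := by decide
      exact this (Co v) (Co u) (Co w) ⟨h1, h2, h3⟩
    have hle : G.dist u w ≤ 2 := by
      have ht := hconn.dist_triangle (u := u) (v := v) (w := w)
      have h1 : G.dist u v = 1 := by rw [SimpleGraph.dist_comm]; exact hdvu u hu
      rw [h1, hdvu w hw] at ht
      omega
    have h0 : G.dist u w ≠ 0 := by
      intro h
      exact hne (hconn.dist_eq_zero_iff.mp h)
    have h1' : G.dist u w ≠ 1 := fun h => hnadj (SimpleGraph.dist_eq_one_iff_adj.mp h)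
    omega
  have hAuw : ∀ u w : V, distMatrix G u w = (G.dist u w : ℝ) := fun _ _ => rfl
  -- the four block sums
  set W := ∑ u ∈ N1, ∑ w ∈ N1, distMatrix G u w with hWdef
  set C := ∑ u ∈ N1, ∑ w ∈ N1ᶜ, distMatrix G u w with hCdef
  set R := ∑ u ∈ N1ᶜ, ∑ w ∈ N1ᶜ, distMatrix G u w with hRdef
  have hW : W = 2*(Δ:ℝ)^2 := by
    rw [hWdef, hN1, Finset.sum_insert hvNF]
    have hrow_v : ∑ w ∈ insert v NF, distMatrix G v w = (Δ:ℝ) := by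
      rw [Finset.sum_insert hvNF]
      have h0 : distMatrix G v v = 0 := by simp [hAuw]
      have hconst : ∀ w ∈ NF, distMatrix G v w = 1 := by
        intro w hw; rw [hAuw, hdvu w hw]; norm_num
      rw [h0, zero_add, Finset.sum_congr rfl hconst, Finset.sum_const, hcardNF,
        nsmul_eq_mul, mul_one]
    have hrow_u : ∀ u ∈ NF, ∑ w ∈ insert v NF, distMatrix G u w = 2*(Δ:ℝ) - 1 := by
      intro u hu
      rw [Finset.sum_insert hvNF]
      have h1 : distMatrix G u v = 1 := by
        rw [hAuw, SimpleGraph.dist_comm, hdvu u hu]; norm_num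
      have h2 : ∑ w ∈ NF, distMatrix G u w = 2*((Δ:ℝ)-1) := by
        rw [Finset.sum_eq_add_sum_sdiff_singleton_of_mem hu]
        have hz : distMatrix G u u = 0 := by simp [hAuw]
        rw [hz, zero_add]
        have hall : ∀ w ∈ NF \ {u}, distMatrix G u w = 2 := by
          intro w hw
          obtain ⟨hw1, hw2⟩ := Finset.mem_sdiff.mp hw
          rw [hAuw, hdist2 u hu w hw1 (fun h => hw2 (by simp [h.symm]))]
          norm_num
        rw [Finset.sum_congr rfl hall, Finset.sum_const,
          Finset.card_sdiff_of_subset (by simpa using hu), hcardNF, Finset.card_singleton,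
          nsmul_eq_mul, Nat.cast_sub hΔ1]
        push_cast; ring
      rw [h1, h2]; ring
    rw [hrow_v, Finset.sum_congr rfl hrow_u, Finset.sum_const, hcardNF, nsmul_eq_mul]
    ring
  have htrans : ∀ u : V, transmission G u
      = ∑ w ∈ N1, distMatrix G u w + ∑ w ∈ N1ᶜ, distMatrix G u w := by
    intro u
    rw [Finset.sum_add_sum_compl]
    rfl
  have hXsum : ∑ u ∈ N1, transmission G u = Dv + tv*(Δ:ℝ) := by
    rw [hN1, Finset.sum_insert hvNF, ← hDv]
    congr 1
    rw [htv]
    have hΔne : (Δ:ℝ) ≠ 0 := by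
      have : (1:ℝ) ≤ (Δ:ℝ) := by exact_mod_cast hΔ1
      linarith
    field_simp
  have hWC : W + C = Dv + tv*(Δ:ℝ) := by
    rw [← hXsum, hWdef, hCdef, ← Finset.sum_add_distrib]
    exact (Finset.sum_congr rfl fun u _ => (htrans u).symm)
  have hC' : ∑ u ∈ N1ᶜ, ∑ w ∈ N1, distMatrix G u w = C := by
    rw [hCdef]; refine Finset.sum_comm.trans ?_
    exact Finset.sum_congr rfl fun u _ => Finset.sum_congr rfl fun w _ => by
      rw [hAuw, hAuw, SimpleGraph.dist_comm]
  have hS2 : S = W + 2*C + R := by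
    rw [hS, ← Finset.sum_add_sum_compl N1 (transmission G)]
    have hA1 : ∑ u ∈ N1, transmission G u = W + C := by
      rw [hWdef, hCdef, ← Finset.sum_add_distrib]
      exact Finset.sum_congr rfl fun u _ => htrans u
    have hA2 : ∑ u ∈ N1ᶜ, transmission G u = C + R := by
      rw [← hC', hRdef, ← Finset.sum_add_distrib]
      exact Finset.sum_congr rfl fun u _ => htrans u
    rw [hA1, hA2]; ring
  -- positivity facts
  have hn1pos : (0:ℝ) < (Δ:ℝ) + 1 := by positivity
  have hmrpos : (0:ℝ) < (n:ℝ) - Δ - 1 := by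
    have : ((Δ:ℝ) + 2) ≤ (n:ℝ) := by exact_mod_cast hΔn
    linarith
  set n1r : ℝ := (Δ:ℝ) + 1 with hn1r
  set mr : ℝ := (n:ℝ) - Δ - 1 with hmr
  have hsq1 : Real.sqrt n1r * Real.sqrt n1r = n1r := Real.mul_self_sqrt hn1pos.le
  have hsq2 : Real.sqrt mr * Real.sqrt mr = mr := Real.mul_self_sqrt hmrpos.le
  have hs1ne : Real.sqrt n1r ≠ 0 := by positivity
  have hs2ne : Real.sqrt mr ≠ 0 := by
    have : 0 < Real.sqrt mr := Real.sqrt_pos.mpr hmrpos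
    linarith
  set e1 : V → ℝ := fun u => if u ∈ N1 then 1/Real.sqrt n1r else 0 with he1
  set e2 : V → ℝ := fun u => if u ∈ N1ᶜ then 1/Real.sqrt mr else 0 with he2
  have h11 : e1 ⬝ᵥ e1 = 1 := by
    rw [he1, indicator_dot, Finset.inter_self, hcardN1]
    push_cast
    rw [div_mul_div_comm, one_mul, hsq1]
    rw [hn1r]
    field_simp
  have h22 : e2 ⬝ᵥ e2 = 1 := by
    rw [he2, indicator_dot, Finset.inter_self, hcardC]
    rw [div_mul_div_comm, one_mul, hsq2]
    field_simp
  have h12 : e1 ⬝ᵥ e2 = 0 := by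
    rw [he1, he2, indicator_dot]
    simp
  have h21 : e2 ⬝ᵥ e1 = 0 := by
    rw [he1, he2, indicator_dot]
    rw [Finset.inter_comm]
    simp
  have hp : e1 ⬝ᵥ (distMatrix G) *ᵥ e1 = W/n1r := by
    rw [he1, indicator_dot_mulVec, ← hWdef, div_mul_div_comm, one_mul, hsq1]
    ring
  have hq : e1 ⬝ᵥ (distMatrix G) *ᵥ e2 = C/(Real.sqrt n1r * Real.sqrt mr) := by
    rw [he1, he2, indicator_dot_mulVec, ← hCdef, div_mul_div_comm, one_mul]
    ring
  have hq' : e2 ⬝ᵥ (distMatrix G) *ᵥ e1 = C/(Real.sqrt n1r * Real.sqrt mr) := by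
    rw [he1, he2, indicator_dot_mulVec, hC', div_mul_div_comm, one_mul]
    ring
  have hr : e2 ⬝ᵥ (distMatrix G) *ᵥ e2 = R/mr := by
    rw [he2, indicator_dot_mulVec, ← hRdef, div_mul_div_comm, one_mul, hsq2]
    ring
  have main := spread_ge_compression (distMatrix_isHermitian G) e1 e2 h11 h22 h12 h21
    hp hq hq' hr
  -- algebraic identification
  have hq2 : (C/(Real.sqrt n1r * Real.sqrt mr))^2 = C^2/(n1r*mr) := by
    rw [div_pow, mul_pow, sq, sq, sq]
    rw [hsq1, hsq2]
  have hCval : C = Dv + tv*(Δ:ℝ) - 2*(Δ:ℝ)^2 := by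
    rw [← hWC, hW]; ring
  have hRval : R = S - 2*(Dv + tv*(Δ:ℝ)) + 2*(Δ:ℝ)^2 := by
    have := hS2
    rw [hW, hCval] at this
    linarith
  have key : a^2 + 4*b*(1+(Δ:ℝ))*((n:ℝ)-(Δ:ℝ)-1)
      = (n1r*mr)^2 * ((W/n1r - R/mr)^2 + 4*(C^2/(n1r*mr))) := by
    rw [ha, hb, hCval, hRval, hW, hn1r, hmr]
    have hn1ne : ((Δ:ℝ)+1) ≠ 0 := ne_of_gt hn1pos
    have hmrne : ((n:ℝ)-Δ-1) ≠ 0 := ne_of_gt hmrpos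
    field_simp
    ring
  have hpos : 0 < n1r * mr := mul_pos hn1pos hmrpos
  have hsqrt : Real.sqrt (a^2 + 4*b*(1+(Δ:ℝ))*((n:ℝ)-(Δ:ℝ)-1))
      = (n1r*mr) * Real.sqrt ((W/n1r - R/mr)^2 + 4*(C/(Real.sqrt n1r * Real.sqrt mr))^2) := by
    rw [hq2, key, Real.sqrt_mul (sq_nonneg _), Real.sqrt_sq hpos.le]
  have hden : (1+(Δ:ℝ))*((n:ℝ)-(Δ:ℝ)-1) = n1r*mr := by
    rw [hn1r, hmr]; ring
  rw [hsqrt, hden, mul_div_cancel_left₀ _ (ne_of_gt hpos)]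
  exact main
end

section
/- Let G be a connected bipartite simple graph on n ≥ 3 vertices with maximum degree Δ ≤ n−2, and let S = Σ_{i=1}^n Tr_G(v_i). For every vertex v of G with deg(v) = Δ, putting D_v = Tr_G(v), a = (Δ+1)(S − 2D_v − 2 t_v Δ) + 2nΔ² and b = D_v² − 2SΔ² + 2 D_v t_v Δ + t_v² Δ², the largest distance eigenvalue satisfies ρ^𝒟(G) ≥ (a + √(a² + 4b(1+Δ)(n−Δ−1))) / (2(1+Δ)(n−Δ−1)). -/
open Finset Matrix

lemma rayleigh_le {V : Type*} [Fintype V] [DecidableEq V] [Nonempty V] {A : Matrix V V ℝ}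
    (hA : A.IsHermitian) (x : V → ℝ) :
    ∑ i, ∑ j, x i * A i j * x j ≤ (⨆ i, hA.eigenvalues i) * ∑ i, x i ^ 2 := by
  classical
  set U : Matrix V V ℝ := (hA.eigenvectorUnitary : Matrix V V ℝ) with hU
  set d : V → ℝ := hA.eigenvalues with hd
  have hAeq : ∀ i j, A i j = ∑ k, U i k * d k * U j k := by
    intro i j
    conv_lhs => rw [hA.spectral_theorem]
    simp only [Unitary.conjStarAlgAut_apply, Matrix.mul_apply, Matrix.diagonal_apply, Matrix.star_apply,
      ite_mul, zero_mul, mul_ite, mul_zero, Finset.sum_ite_eq, Finset.sum_ite_eq',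
      Finset.mem_univ, if_true, Function.comp_apply, RCLike.ofReal_real_eq_id, id_eq,
      star_trivial]
    rfl
  set y : V → ℝ := fun k => ∑ i, x i * U i k with hy
  have key : ∀ k, d k * y k ^ 2 = ∑ i, ∑ j, x i * (U i k * d k * U j k) * x j := by
    intro k
    rw [hy, pow_two, Finset.sum_mul_sum, Finset.mul_sum]
    exact Finset.sum_congr rfl fun i _ => by
      rw [Finset.mul_sum]; exact Finset.sum_congr rfl fun j _ => by ring
  have hL : ∑ i, ∑ j, x i * A i j * x j = ∑ k, d k * y k ^ 2 := by
    calc ∑ i, ∑ j, x i * A i j * x j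
        = ∑ i, ∑ j, ∑ k, x i * (U i k * d k * U j k) * x j := by
          refine Finset.sum_congr rfl fun i _ => Finset.sum_congr rfl fun j _ => ?_
          rw [hAeq i j, Finset.mul_sum, Finset.sum_mul]
      _ = ∑ i, ∑ k, ∑ j, x i * (U i k * d k * U j k) * x j := by
          exact Finset.sum_congr rfl fun i _ => Finset.sum_comm
      _ = ∑ k, ∑ i, ∑ j, x i * (U i k * d k * U j k) * x j := Finset.sum_comm
      _ = ∑ k, d k * y k ^ 2 := by simp only [key]
  have hUU : U * star U = 1 := (Matrix.mem_unitaryGroup_iff).mp hA.eigenvectorUnitary.2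
  have h1 : ∀ i j : V, ∑ k, U i k * U j k = (1 : Matrix V V ℝ) i j := by
    intro i j
    rw [← hUU, Matrix.mul_apply]
    exact Finset.sum_congr rfl fun k _ => by simp [Matrix.star_apply]
  have key2 : ∀ k, y k ^ 2 = ∑ i, ∑ j, x i * x j * (U i k * U j k) := by
    intro k
    rw [hy, pow_two, Finset.sum_mul_sum]
    exact Finset.sum_congr rfl fun i _ => Finset.sum_congr rfl fun j _ => by ring
  have hN : ∑ k, y k ^ 2 = ∑ i, x i ^ 2 := by
    calc ∑ k, y k ^ 2 = ∑ k, ∑ i, ∑ j, x i * x j * (U i k * U j k) := by simp only [key2]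
      _ = ∑ i, ∑ k, ∑ j, x i * x j * (U i k * U j k) := Finset.sum_comm
      _ = ∑ i, ∑ j, ∑ k, x i * x j * (U i k * U j k) := by
          exact Finset.sum_congr rfl fun i _ => Finset.sum_comm
      _ = ∑ i, ∑ j, x i * x j * (1 : Matrix V V ℝ) i j := by
          refine Finset.sum_congr rfl fun i _ => Finset.sum_congr rfl fun j _ => ?_
          rw [← Finset.mul_sum, h1]
      _ = ∑ i, x i ^ 2 := by
          refine Finset.sum_congr rfl fun i _ => ?_
          simp [Matrix.one_apply, Finset.sum_ite_eq, pow_two]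
  rw [hL, ← hN, Finset.mul_sum]
  apply Finset.sum_le_sum
  intro k _
  exact mul_le_mul_of_nonneg_right (le_ciSup (Set.finite_range d).bddAbove k) (sq_nonneg _)

set_option maxHeartbeats 1600000 in
theorem stmt2 {V : Type*} [Fintype V] [DecidableEq V] (G : SimpleGraph V) [DecidableRel G.Adj]
    (hconn : G.Connected) (hbip : G.Colorable 2)
    (n : ℕ) (hn : n = Fintype.card V) (hn3 : 3 ≤ n)
    (Δ : ℕ) (hΔ : G.maxDegree = Δ) (hΔn : Δ + 2 ≤ n)
    (S : ℝ) (hS : S = ∑ u, transmission G u)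
    (v : V) (hv : G.degree v = Δ)
    (Dv tv a b : ℝ)
    (hDv : Dv = transmission G v)
    (htv : tv = (∑ u ∈ G.neighborFinset v, transmission G u) / Δ)
    (ha : a = (Δ + 1) * (S - 2*Dv - 2*tv*Δ) + 2*n*Δ^2)
    (hb : b = Dv^2 - 2*S*Δ^2 + 2*Dv*tv*Δ + tv^2*Δ^2) :
    (a + Real.sqrt (a^2 + 4*b*(1 + Δ)*(n - Δ - 1))) / (2*(1 + Δ)*((n : ℝ) - Δ - 1)) ≤
      maxEig (distMatrix_isHermitian G) := by
  classical
  have hNe : Nonempty V := by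
    rw [← Fintype.card_pos_iff, ← hn]; omega
  obtain ⟨C⟩ := hbip
  -- basic numbers
  set N : Finset V := G.neighborFinset v with hNdef
  have hvN : v ∉ N := SimpleGraph.notMem_neighborFinset_self G v
  have hNcard : N.card = Δ := by
    rw [hNdef, SimpleGraph.card_neighborFinset_eq_degree, hv]
  set V1 : Finset V := insert v N with hV1def
  have hV1card : V1.card = Δ + 1 := by
    rw [hV1def, Finset.card_insert_of_notMem hvN, hNcard]
  have hΔ1 : 1 ≤ Δ := by
    obtain ⟨u, hu⟩ := Fintype.exists_ne_of_one_lt_card (by omega) v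
    obtain ⟨w⟩ := hconn.preconnected v u
    cases w with
    | nil => exact absurd rfl hu
    | cons h _ =>
      have : 0 < G.degree v := G.degree_pos_iff_exists_adj v |>.mpr ⟨_, h⟩
      omega
  have hΔr1 : (1:ℝ) ≤ (Δ:ℝ) := by exact_mod_cast hΔ1
  have hmpos : (0:ℝ) < (n:ℝ) - Δ - 1 := by
    have : ((Δ:ℝ) + 2) ≤ (n:ℝ) := by exact_mod_cast hΔn
    linarith
  have hkpos : (0:ℝ) < 1 + (Δ:ℝ) := by linarith
  -- transmission sum over V1
  have hΔne : ((Δ:ℝ)) ≠ 0 := by positivity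
  have htvΔ : ∑ u ∈ N, transmission G u = tv * Δ := by
    rw [htv]; field_simp
  have hT : ∑ i ∈ V1, transmission G i = Dv + tv * Δ := by
    rw [hV1def, Finset.sum_insert hvN, htvΔ, hDv]
  -- distances within V1
  have hdist1 : ∀ j ∈ N, (G.dist v j : ℝ) = 1 := by
    intro j hj
    have hadj : G.Adj v j := (SimpleGraph.mem_neighborFinset G v j).mp hj
    rw [SimpleGraph.dist_eq_one_iff_adj.mpr hadj]; norm_num
  have hdist2 : ∀ i ∈ N, ∀ j ∈ N, i ≠ j → (2:ℝ) ≤ (G.dist i j : ℝ) := by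
    intro i hi j hj hij
    have hai : G.Adj v i := (SimpleGraph.mem_neighborFinset G v i).mp hi
    have haj : G.Adj v j := (SimpleGraph.mem_neighborFinset G v j).mp hj
    have hCij : C i = C j := by
      have h1 : C i ≠ C v := (C.valid hai).symm
      have h2 : C j ≠ C v := (C.valid haj).symm
      have := (C i).isLt; have := (C j).isLt; have := (C v).isLt
      omega
    have hnadj : ¬ G.Adj i j := fun h => C.valid h hCij
    have h1 : G.dist i j ≠ 1 := fun h => hnadj (SimpleGraph.dist_eq_one_iff_adj.mp h)
    have h0 : 0 < G.dist i j := hconn.pos_dist_of_ne hij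
    have : 2 ≤ G.dist i j := by omega
    exact_mod_cast this
  -- sigma quantities
  set s11 : ℝ := ∑ i ∈ V1, ∑ j ∈ V1, (G.dist i j : ℝ) with hs11def
  set s12 : ℝ := ∑ i ∈ V1, ∑ j ∈ V1ᶜ, (G.dist i j : ℝ) with hs12def
  set s21 : ℝ := ∑ i ∈ V1ᶜ, ∑ j ∈ V1, (G.dist i j : ℝ) with hs21def
  set s22 : ℝ := ∑ i ∈ V1ᶜ, ∑ j ∈ V1ᶜ, (G.dist i j : ℝ) with hs22def
  have h2112 : s21 = s12 := by
    rw [hs21def, Finset.sum_comm]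
    exact Finset.sum_congr rfl fun i _ => Finset.sum_congr rfl fun j _ => by
      rw [SimpleGraph.dist_comm]
  have htr : ∀ i, transmission G i = (∑ j ∈ V1, (G.dist i j : ℝ)) + ∑ j ∈ V1ᶜ, (G.dist i j : ℝ) :=
    fun i => (Finset.sum_add_sum_compl V1 _).symm
  have hsum1 : s11 + s12 = Dv + tv * Δ := by
    rw [← hT, hs11def, hs12def, ← Finset.sum_add_distrib]
    exact (Finset.sum_congr rfl fun i _ => (htr i).symm)
  have hsum2 : s11 + s12 + s21 + s22 = S := by
    rw [hS, ← Finset.sum_add_sum_compl V1 (transmission G)]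
    have e1 : ∑ i ∈ V1, transmission G i = s11 + s12 := by
      rw [hs11def, hs12def, ← Finset.sum_add_distrib]
      exact Finset.sum_congr rfl fun i _ => htr i
    have e2 : ∑ i ∈ V1ᶜ, transmission G i = s21 + s22 := by
      rw [hs21def, hs22def, ← Finset.sum_add_distrib]
      exact Finset.sum_congr rfl fun i _ => htr i
    rw [e1, e2]; ring
  -- lower bound on s11
  have hs11lb : 2*(Δ:ℝ)^2 ≤ s11 := by
    have hdnn : ∀ i j : V, (0:ℝ) ≤ (G.dist i j : ℝ) := fun i j => by positivity
    have hrow : ∀ i ∈ N, 1 + 2*((Δ:ℝ) - 1) ≤ ∑ j ∈ V1, (G.dist i j : ℝ) := by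
      intro i hi
      rw [hV1def, Finset.sum_insert hvN]
      have hiv : (G.dist i v : ℝ) = 1 := by rw [SimpleGraph.dist_comm]; exact hdist1 i hi
      have h1 : ∑ j ∈ N.erase i, (2:ℝ) ≤ ∑ j ∈ N.erase i, (G.dist i j : ℝ) :=
        Finset.sum_le_sum fun j hj =>
          hdist2 i hi j (Finset.mem_of_mem_erase hj) (Finset.ne_of_mem_erase hj).symm
      have h2 : ∑ j ∈ N.erase i, (G.dist i j : ℝ) ≤ ∑ j ∈ N, (G.dist i j : ℝ) :=
        Finset.sum_le_sum_of_subset_of_nonneg (Finset.erase_subset i N)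
          (fun j _ _ => hdnn i j)
      have h3 : ∑ j ∈ N.erase i, (2:ℝ) = 2*((Δ:ℝ) - 1) := by
        rw [Finset.sum_const, Finset.card_erase_of_mem hi, hNcard, nsmul_eq_mul,
          Nat.cast_sub hΔ1]
        ring
      rw [hiv]
      linarith only [h1, h2, h3]
    have hrowv : ∑ j ∈ V1, (G.dist v j : ℝ) = (Δ:ℝ) := by
      rw [hV1def, Finset.sum_insert hvN]
      have : ∑ j ∈ N, (G.dist v j : ℝ) = ∑ j ∈ N, (1:ℝ) :=
        Finset.sum_congr rfl fun j hj => hdist1 j hj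
      rw [this, Finset.sum_const, hNcard]
      simp
    have : s11 = ∑ j ∈ V1, (G.dist v j : ℝ) + ∑ i ∈ N, ∑ j ∈ V1, (G.dist i j : ℝ) := by
      rw [hs11def]
      conv_lhs => rw [hV1def]
      rw [Finset.sum_insert hvN]
    rw [this, hrowv]
    have hsum : ∑ i ∈ N, (1 + 2*((Δ:ℝ) - 1)) ≤ ∑ i ∈ N, ∑ j ∈ V1, (G.dist i j : ℝ) :=
      Finset.sum_le_sum hrow
    rw [Finset.sum_const, hNcard, nsmul_eq_mul] at hsum
    have e : (Δ:ℝ) + (Δ:ℝ)*(1 + 2*((Δ:ℝ)-1)) = 2*(Δ:ℝ)^2 := by ring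
    linarith only [hsum, e]
  -- discriminant and lambda
  have hid : a^2 + 4*b*(1 + (Δ:ℝ))*((n:ℝ) - Δ - 1) =
      ((1+(Δ:ℝ))*(S - 2*Dv - 2*tv*Δ + 2*(Δ:ℝ)^2) - 2*((n:ℝ)-Δ-1)*(Δ:ℝ)^2)^2
        + 4*(1+(Δ:ℝ))*((n:ℝ)-Δ-1)*(Dv + tv*Δ - 2*(Δ:ℝ)^2)^2 := by
    rw [ha, hb]; ring
  have hdisc : 0 ≤ a^2 + 4*b*(1 + (Δ:ℝ))*((n:ℝ) - Δ - 1) := by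
    rw [hid]
    have h4 : (0:ℝ) ≤ 4*(1+(Δ:ℝ))*((n:ℝ)-Δ-1) :=
      mul_nonneg (by linarith only [hkpos]) hmpos.le
    exact add_nonneg (sq_nonneg _) (mul_nonneg h4 (sq_nonneg _))
  set s : ℝ := Real.sqrt (a^2 + 4*b*(1 + (Δ:ℝ))*((n:ℝ) - Δ - 1)) with hsdef
  have hs2 : s^2 = a^2 + 4*b*(1 + (Δ:ℝ))*((n:ℝ) - Δ - 1) := Real.sq_sqrt hdisc
  set lam : ℝ := (a + s) / (2*(1 + (Δ:ℝ))*((n:ℝ) - Δ - 1)) with hlamdef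
  have hdenne : 2*(1 + (Δ:ℝ))*((n:ℝ) - Δ - 1) ≠ 0 := by positivity
  have hlameq : lam * (2*(1 + (Δ:ℝ))*((n:ℝ) - Δ - 1)) = a + s := by
    rw [hlamdef, div_mul_cancel₀ _ hdenne]
  have hseq : s = lam * (2*(1 + (Δ:ℝ))*((n:ℝ) - Δ - 1)) - a := by
    linarith only [hlameq]
  have hquad : (1+(Δ:ℝ))*((n:ℝ)-Δ-1)*lam^2 = a*lam + b := by
    have h4 : 4*((1+(Δ:ℝ))*((n:ℝ)-Δ-1)) *
        ((1+(Δ:ℝ))*((n:ℝ)-Δ-1)*lam^2 - (a*lam + b)) = 0 := by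
      have := hs2
      rw [hseq] at this
      linear_combination this
    have h5 : (4:ℝ)*((1+(Δ:ℝ))*((n:ℝ)-Δ-1)) ≠ 0 := by positivity
    have := mul_eq_zero.mp h4
    rcases this with h | h
    · exact absurd h h5
    · linarith only [h]
  -- choose test vector values
  obtain ⟨p, q, hpq0, hkey⟩ : ∃ p q : ℝ, (p ≠ 0 ∨ q ≠ 0) ∧
      2*(Δ:ℝ)^2*(p-q)^2 + 2*p*q*(Dv + tv*Δ) + q^2*(S - 2*(Dv + tv*Δ))
        = lam*((1+(Δ:ℝ))*p^2 + ((n:ℝ)-Δ-1)*q^2) := by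
    by_cases hdeg : (Dv + tv*(Δ:ℝ) - 2*(Δ:ℝ)^2 = 0) ∧ (lam*(1+(Δ:ℝ)) - 2*(Δ:ℝ)^2 = 0)
    · refine ⟨1, 0, Or.inl one_ne_zero, ?_⟩
      have h2 := hdeg.2
      linear_combination (-1 : ℝ) * h2
    · refine ⟨Dv + tv*(Δ:ℝ) - 2*(Δ:ℝ)^2, lam*(1+(Δ:ℝ)) - 2*(Δ:ℝ)^2, ?_, ?_⟩
      · by_contra hc
        push_neg at hc
        exact hdeg ⟨hc.1, hc.2⟩
      · linear_combination (-(lam*(1+(Δ:ℝ)) - 2*(Δ:ℝ)^2)) * hquad -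
          (lam*(1+(Δ:ℝ)) - 2*(Δ:ℝ)^2)*lam*ha - (lam*(1+(Δ:ℝ)) - 2*(Δ:ℝ)^2)*hb
  -- the test vector
  set x : V → ℝ := fun u => if u ∈ V1 then p else q with hxdef
  have hxV1 : ∀ u ∈ V1, x u = p := fun u hu => if_pos hu
  have hxC : ∀ u ∈ V1ᶜ, x u = q := fun u hu => if_neg (Finset.mem_compl.mp hu)
  have hdM : ∀ i j, distMatrix G i j = (G.dist i j : ℝ) := fun i j => rfl
  -- quadratic form value
  have hrowsum : ∀ i, ∑ j, x i * distMatrix G i j * x j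
      = x i * (∑ j ∈ V1, (G.dist i j : ℝ)) * p + x i * (∑ j ∈ V1ᶜ, (G.dist i j : ℝ)) * q := by
    intro i
    rw [← Finset.sum_add_sum_compl V1 (fun j => x i * distMatrix G i j * x j)]
    congr 1
    · calc ∑ j ∈ V1, x i * distMatrix G i j * x j
          = ∑ j ∈ V1, x i * (G.dist i j : ℝ) * p :=
            Finset.sum_congr rfl fun j hj => by rw [hdM, hxV1 j hj]
        _ = x i * (∑ j ∈ V1, (G.dist i j : ℝ)) * p := by
            rw [Finset.mul_sum, Finset.sum_mul]
    · calc ∑ j ∈ V1ᶜ, x i * distMatrix G i j * x j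
          = ∑ j ∈ V1ᶜ, x i * (G.dist i j : ℝ) * q :=
            Finset.sum_congr rfl fun j hj => by rw [hdM, hxC j hj]
        _ = x i * (∑ j ∈ V1ᶜ, (G.dist i j : ℝ)) * q := by
            rw [Finset.mul_sum, Finset.sum_mul]
  have hQ : ∑ i, ∑ j, x i * distMatrix G i j * x j
      = p*p*s11 + p*q*s12 + q*p*s21 + q*q*s22 := by
    rw [← Finset.sum_add_sum_compl V1 (fun i => ∑ j, x i * distMatrix G i j * x j)]
    have h1 : ∑ i ∈ V1, ∑ j, x i * distMatrix G i j * x j = p*p*s11 + p*q*s12 := by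
      calc ∑ i ∈ V1, ∑ j, x i * distMatrix G i j * x j
          = ∑ i ∈ V1, (p * (∑ j ∈ V1, (G.dist i j : ℝ)) * p
              + p * (∑ j ∈ V1ᶜ, (G.dist i j : ℝ)) * q) :=
            Finset.sum_congr rfl fun i hi => by rw [hrowsum i, hxV1 i hi]
        _ = ∑ i ∈ V1, (p*p*(∑ j ∈ V1, (G.dist i j : ℝ)) + p*q*(∑ j ∈ V1ᶜ, (G.dist i j : ℝ))) :=
            Finset.sum_congr rfl fun i _ => by ring
        _ = p*p*s11 + p*q*s12 := by
            rw [Finset.sum_add_distrib, ← Finset.mul_sum, ← Finset.mul_sum, hs11def, hs12def]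
    have h2 : ∑ i ∈ V1ᶜ, ∑ j, x i * distMatrix G i j * x j = q*p*s21 + q*q*s22 := by
      calc ∑ i ∈ V1ᶜ, ∑ j, x i * distMatrix G i j * x j
          = ∑ i ∈ V1ᶜ, (q * (∑ j ∈ V1, (G.dist i j : ℝ)) * p
              + q * (∑ j ∈ V1ᶜ, (G.dist i j : ℝ)) * q) :=
            Finset.sum_congr rfl fun i hi => by rw [hrowsum i, hxC i hi]
        _ = ∑ i ∈ V1ᶜ, (q*p*(∑ j ∈ V1, (G.dist i j : ℝ)) + q*q*(∑ j ∈ V1ᶜ, (G.dist i j : ℝ))) :=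
            Finset.sum_congr rfl fun i _ => by ring
        _ = q*p*s21 + q*q*s22 := by
            rw [Finset.sum_add_distrib, ← Finset.mul_sum, ← Finset.mul_sum, hs21def, hs22def]
    rw [h1, h2]; ring
  -- norm value
  have hX2 : ∑ i, x i ^ 2 = (1+(Δ:ℝ))*p^2 + ((n:ℝ)-Δ-1)*q^2 := by
    rw [← Finset.sum_add_sum_compl V1 (fun i => x i ^ 2)]
    have h1 : ∑ i ∈ V1, x i ^ 2 = (1+(Δ:ℝ))*p^2 := by
      rw [Finset.sum_congr rfl fun i hi => by rw [hxV1 i hi], Finset.sum_const, hV1card,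
        nsmul_eq_mul]
      push_cast; ring
    have h2 : ∑ i ∈ V1ᶜ, x i ^ 2 = ((n:ℝ)-Δ-1)*q^2 := by
      rw [Finset.sum_congr rfl fun i hi => by rw [hxC i hi], Finset.sum_const,
        Finset.card_compl, hV1card, nsmul_eq_mul, ← hn, Nat.cast_sub (by omega)]
      push_cast; ring
    rw [h1, h2]
  -- combine
  have hray := rayleigh_le (distMatrix_isHermitian G) x
  have hlow : lam * ((1+(Δ:ℝ))*p^2 + ((n:ℝ)-Δ-1)*q^2)
      ≤ ∑ i, ∑ j, x i * distMatrix G i j * x j := by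
    rw [hQ, ← hkey]
    have hs12' : s12 = (Dv + tv*Δ) - s11 := by linarith
    have hs22' : s22 = S - 2*(Dv + tv*Δ) + s11 := by
      rw [h2112] at hsum2; linarith
    rw [h2112, hs12', hs22']
    have hstep : 0 ≤ (s11 - 2*(Δ:ℝ)^2) * (p-q)^2 :=
      mul_nonneg (by linarith only [hs11lb]) (sq_nonneg _)
    have hre : p*p*s11 + p*q*((Dv + tv*Δ) - s11) + q*p*((Dv + tv*Δ) - s11)
        + q*q*(S - 2*(Dv + tv*Δ) + s11)
        - (2*(Δ:ℝ)^2*(p-q)^2 + 2*p*q*(Dv + tv*Δ) + q^2*(S - 2*(Dv + tv*Δ)))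
        = (s11 - 2*(Δ:ℝ)^2) * (p-q)^2 := by ring
    linarith only [hstep, hre]
  have hXpos : 0 < (1+(Δ:ℝ))*p^2 + ((n:ℝ)-Δ-1)*q^2 := by
    rcases hpq0 with hp | hq
    · have h1 : 0 < (1+(Δ:ℝ))*p^2 := mul_pos hkpos (by positivity)
      have h2 : 0 ≤ ((n:ℝ)-Δ-1)*q^2 := mul_nonneg hmpos.le (sq_nonneg q)
      linarith only [h1, h2]
    · have h1 : 0 < ((n:ℝ)-Δ-1)*q^2 := mul_pos hmpos (by positivity)
      have h2 : 0 ≤ (1+(Δ:ℝ))*p^2 := mul_nonneg hkpos.le (sq_nonneg p)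
      linarith only [h1, h2]
  have hfin : lam ≤ maxEig (distMatrix_isHermitian G) := by
    have h1 : lam * ((1+(Δ:ℝ))*p^2 + ((n:ℝ)-Δ-1)*q^2)
        ≤ maxEig (distMatrix_isHermitian G) * ((1+(Δ:ℝ))*p^2 + ((n:ℝ)-Δ-1)*q^2) := by
      calc lam * ((1+(Δ:ℝ))*p^2 + ((n:ℝ)-Δ-1)*q^2)
          ≤ ∑ i, ∑ j, x i * distMatrix G i j * x j := hlow
        _ ≤ maxEig (distMatrix_isHermitian G) * ∑ i, x i ^ 2 := hray
        _ = maxEig (distMatrix_isHermitian G) * ((1+(Δ:ℝ))*p^2 + ((n:ℝ)-Δ-1)*q^2) := by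
            rw [hX2]
    exact le_of_mul_le_mul_right (by linarith only [h1]) hXpos
  exact hfin
end

section
/- Let G be a connected bipartite simple graph on n ≥ 3 vertices with maximum degree Δ ≤ n−2, and let S = Σ_{i=1}^n Tr_G(v_i). For every vertex v of G with deg(v) = Δ, putting D_v = Tr_G(v), a = (Δ+1)(S − 2D_v − 2 t_v Δ) + 2nΔ² and b = D_v² − 2SΔ² + 2 D_v t_v Δ + t_v² Δ², the least distance eigenvalue satisfies ρ^𝒟_min(G) ≤ (a + √(a² + 4b(1+Δ)(n−Δ−1))) / (2(1+Δ)(n−Δ−1)). -/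
open Finset Matrix

theorem rayleigh_min {V : Type*} [Fintype V] [DecidableEq V] {A : Matrix V V ℝ} (hA : A.IsHermitian)
    (x : V → ℝ) :
    (⨅ i, hA.eigenvalues i) * (x ⬝ᵥ x) ≤ x ⬝ᵥ A.mulVec x := by
  classical
  cases isEmpty_or_nonempty V
  · simp [dotProduct]
  set U : Matrix V V ℝ := (hA.eigenvectorUnitary : Matrix V V ℝ) with hU
  set c : V → ℝ := Uᵀ *ᵥ x with hc
  have hspec := hA.spectral_theorem
  have hstar : star U = Uᵀ := by
    ext i j; simp [Matrix.star_apply]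
  have hUU : U * Uᵀ = 1 := by
    rw [← hstar]
    exact (Matrix.mem_unitaryGroup_iff.mp hA.eigenvectorUnitary.2)
  have h1 : x ⬝ᵥ A.mulVec x = ∑ i, hA.eigenvalues i * (c i)^2 := by
    conv_lhs => rw [hspec, Unitary.conjStarAlgAut_apply]
    rw [← hU, hstar, ← Matrix.mulVec_mulVec, ← Matrix.mulVec_mulVec,
      Matrix.dotProduct_mulVec, ← Matrix.mulVec_transpose, ← hc]
    simp [Matrix.mulVec, dotProduct, Matrix.diagonal, mul_comm, sq, mul_assoc, mul_left_comm]
  have h2 : x ⬝ᵥ x = ∑ i, (c i)^2 := by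
    have : c ⬝ᵥ c = x ⬝ᵥ x := by
      rw [hc, Matrix.dotProduct_mulVec, ← Matrix.mulVec_transpose,
        Matrix.transpose_transpose, Matrix.mulVec_mulVec, hUU]
      simp
    rw [← this]
    simp [dotProduct, sq]
  rw [h1, h2, Finset.mul_sum]
  apply Finset.sum_le_sum
  intro i _
  have h3 : (⨅ j, hA.eigenvalues j) ≤ hA.eigenvalues i :=
    ciInf_le (Finite.bddBelow_range _) i
  nlinarith [sq_nonneg (c i)]


set_option maxHeartbeats 1000000 in
theorem stmt3 {V : Type*} [Fintype V] [DecidableEq V] (G : SimpleGraph V) [DecidableRel G.Adj]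
    (hconn : G.Connected) (hbip : G.Colorable 2)
    (n : ℕ) (hn : n = Fintype.card V) (hn3 : 3 ≤ n)
    (Δ : ℕ) (hΔ : G.maxDegree = Δ) (hΔn : Δ + 2 ≤ n)
    (S : ℝ) (hS : S = ∑ u, transmission G u)
    (v : V) (hv : G.degree v = Δ)
    (Dv tv a b : ℝ)
    (hDv : Dv = transmission G v)
    (htv : tv = (∑ u ∈ G.neighborFinset v, transmission G u) / Δ)
    (ha : a = (Δ + 1) * (S - 2*Dv - 2*tv*Δ) + 2*n*Δ^2)
    (hb : b = Dv^2 - 2*S*Δ^2 + 2*Dv*tv*Δ + tv^2*Δ^2) :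
    minEig (distMatrix_isHermitian G) ≤
      (a + Real.sqrt (a^2 + 4*b*(1 + Δ)*(n - Δ - 1))) / (2*(1 + Δ)*((n : ℝ) - Δ - 1)) := by
  classical
  -- Δ ≥ 1
  have hΔ1 : 1 ≤ Δ := by
    obtain ⟨u, hu⟩ := Fintype.exists_ne_of_one_lt_card (by omega) v
    obtain ⟨p⟩ := hconn.preconnected v u
    have hnil : ¬ p.Nil := SimpleGraph.Walk.not_nil_of_ne (Ne.symm hu)
    have hadj : G.Adj v (p.getVert 1) := p.adj_snd hnil
    have : 0 < G.degree v := G.degree_pos_iff_exists_adj v |>.mpr ⟨_, hadj⟩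
    omega
  set N := G.neighborFinset v with hN
  have hvN : v ∉ N := by simp [hN]
  have hcardN : N.card = Δ := by rw [hN, SimpleGraph.card_neighborFinset_eq_degree, hv]
  set C : Finset V := insert v N with hC
  have hcardC : C.card = Δ + 1 := by rw [hC, Finset.card_insert_of_notMem hvN, hcardN]
  have hsplitC : ∀ f : V → ℝ, ∑ u ∈ C, f u = f v + ∑ u ∈ N, f u := fun f => by
    rw [hC]; exact Finset.sum_insert hvN
  -- distance facts
  have hd1 : ∀ u ∈ N, G.dist v u = 1 := by
    intro u hu
    exact SimpleGraph.dist_eq_one_iff_adj.mpr (by rwa [hN, SimpleGraph.mem_neighborFinset] at hu)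
  have hd2 : ∀ u ∈ N, ∀ w ∈ N, u ≠ w → G.dist u w = 2 := by
    intro u hu w hw huw
    rw [hN, SimpleGraph.mem_neighborFinset] at hu hw
    have hle : G.dist u w ≤ 2 := by
      have := hconn.dist_triangle (u := u) (v := v) (w := w)
      have h1 : G.dist u v = 1 := by
        rw [SimpleGraph.dist_comm]; exact SimpleGraph.dist_eq_one_iff_adj.mpr hu
      have h2 : G.dist v w = 1 := SimpleGraph.dist_eq_one_iff_adj.mpr hw
      omega
    have hne0 : G.dist u w ≠ 0 := fun h => huw (hconn.dist_eq_zero_iff.mp h)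
    have hne1 : G.dist u w ≠ 1 := by
      intro h
      have hadj := SimpleGraph.dist_eq_one_iff_adj.mp h
      obtain ⟨col⟩ := hbip
      have h1 := col.valid hu
      have h2 := col.valid hw
      have h3 := col.valid hadj
      have g1 : (col v).val ≠ (col u).val := fun hh => h1 (Fin.ext hh)
      have g2 : (col v).val ≠ (col w).val := fun hh => h2 (Fin.ext hh)
      have g3 : (col u).val ≠ (col w).val := fun hh => h3 (Fin.ext hh)
      have l1 : (col u).val < 2 := (col u).isLt
      have l2 : (col w).val < 2 := (col w).isLt
      have l3 : (col v).val < 2 := (col v).isLt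
      omega
    omega
  -- partition sums
  set s11 : ℝ := ∑ u ∈ C, ∑ w ∈ C, (G.dist u w : ℝ) with hs11def
  set s12 : ℝ := ∑ u ∈ C, ∑ w ∈ Cᶜ, (G.dist u w : ℝ) with hs12def
  set s22 : ℝ := ∑ u ∈ Cᶜ, ∑ w ∈ Cᶜ, (G.dist u w : ℝ) with hs22def
  have hΔR : (1:ℝ) ≤ (Δ:ℝ) := by exact_mod_cast hΔ1
  have hinner : ∀ u ∈ N, ∑ w ∈ N, (G.dist u w : ℝ) = 2*((Δ:ℝ) - 1) := by
    intro u hu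
    rw [← Finset.add_sum_erase N _ hu]
    have hz : (G.dist u u : ℝ) = 0 := by simp
    have hconst : ∀ w ∈ N.erase u, (G.dist u w : ℝ) = 2 := by
      intro w hw
      have hw' := Finset.mem_of_mem_erase hw
      have hne := Finset.ne_of_mem_erase hw
      rw [hd2 u hu w hw' (Ne.symm hne)]; norm_num
    rw [hz, Finset.sum_congr rfl hconst, Finset.sum_const, Finset.card_erase_of_mem hu, hcardN]
    have : ((Δ - 1 : ℕ) : ℝ) = (Δ:ℝ) - 1 := by
      push_cast [hΔ1]; ring
    rw [nsmul_eq_mul, this]; ring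
  have hgv : ∑ w ∈ C, (G.dist v w : ℝ) = (Δ:ℝ) := by
    rw [hsplitC]
    have hconst : ∀ w ∈ N, (G.dist v w : ℝ) = 1 := fun w hw => by rw [hd1 w hw]; norm_num
    rw [Finset.sum_congr rfl hconst, Finset.sum_const, hcardN]
    simp
  have hgu : ∀ u ∈ N, ∑ w ∈ C, (G.dist u w : ℝ) = 1 + 2*((Δ:ℝ)-1) := by
    intro u hu
    rw [hsplitC]
    have h1 : (G.dist u v : ℝ) = 1 := by rw [SimpleGraph.dist_comm, hd1 u hu]; norm_num
    rw [h1, hinner u hu]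
  have hs11 : s11 = 2*(Δ:ℝ)^2 := by
    rw [hs11def, hsplitC (fun u => ∑ w ∈ C, (G.dist u w : ℝ)), hgv,
      Finset.sum_congr rfl hgu, Finset.sum_const, hcardN, nsmul_eq_mul]
    ring
  -- transmissions
  have htrans : ∀ u, transmission G u = (∑ w ∈ C, (G.dist u w:ℝ)) + ∑ w ∈ Cᶜ, (G.dist u w:ℝ) := by
    intro u; rw [transmission, ← Finset.sum_add_sum_compl C]
  have htvΔ : tv * (Δ:ℝ) = ∑ u ∈ N, transmission G u := by
    rw [htv, hN]
    field_simp
  have hT : Dv + tv*(Δ:ℝ) = s11 + s12 := by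
    rw [hDv, htvΔ]
    have : transmission G v + ∑ u ∈ N, transmission G u = ∑ u ∈ C, transmission G u :=
      (hsplitC (transmission G)).symm
    rw [this, hs11def, hs12def, ← Finset.sum_add_distrib]
    exact Finset.sum_congr rfl fun u _ => htrans u
  have hs21 : ∑ u ∈ Cᶜ, ∑ w ∈ C, (G.dist u w : ℝ) = s12 := by
    rw [hs12def, Finset.sum_comm]
    apply Finset.sum_congr rfl
    intro w hw
    apply Finset.sum_congr rfl
    intro u hu
    rw [SimpleGraph.dist_comm]
  have hSsum : S = s11 + 2*s12 + s22 := by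
    rw [hS, ← Finset.sum_add_sum_compl C (transmission G)]
    have e1 : ∑ u ∈ C, transmission G u = s11 + s12 := by
      rw [hs11def, hs12def, ← Finset.sum_add_distrib]
      exact Finset.sum_congr rfl fun u _ => htrans u
    have e2 : ∑ u ∈ Cᶜ, transmission G u = s12 + s22 := by
      rw [← hs21, hs22def, ← Finset.sum_add_distrib]
      exact Finset.sum_congr rfl fun u _ => htrans u
    rw [e1, e2]; ring
  -- abbreviations for sizes
  set P : ℝ := (Δ:ℝ) + 1 with hPdef
  set Qr : ℝ := (n:ℝ) - Δ - 1 with hQdef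
  have hP : 0 < P := by rw [hPdef]; linarith
  have hQ : 0 < Qr := by
    rw [hQdef]
    have : ((Δ:ℝ) + 2) ≤ (n:ℝ) := by exact_mod_cast hΔn
    linarith
  have hcardCc : ((Cᶜ.card : ℕ) : ℝ) = Qr := by
    rw [Finset.card_compl, hcardC, ← hn, hQdef]
    have h1 : Δ + 1 ≤ n := by omega
    push_cast [h1]
    ring
  have hcardCR : ((C.card : ℕ) : ℝ) = P := by rw [hcardC, hPdef]; push_cast; ring
  have hnPQ : (n:ℝ) = P + Qr := by rw [hPdef, hQdef]; ring
  -- rewrite a, b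
  have hDv' : Dv = s11 + s12 - tv*(Δ:ℝ) := by linarith [hT]
  have ha' : a = Qr*s11 + P*s22 := by
    rw [ha, hSsum, hDv', hnPQ, hs11, hPdef]
    ring
  have hb' : b = s12^2 - s11*s22 := by
    rw [hb, hSsum, hDv', hs11]
    ring
  -- the root
  set disc : ℝ := a^2 + 4*b*(1 + (Δ:ℝ))*((n:ℝ) - Δ - 1) with hdiscdef
  have hdisc_eq : disc = (Qr*s11 - P*s22)^2 + 4*(P*Qr)*s12^2 := by
    rw [hdiscdef, ha', hb', hPdef, hQdef]
    ring
  have hdisc : 0 ≤ disc := by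
    rw [hdisc_eq]
    have h4 : 0 ≤ 4*(P*Qr)*s12^2 :=
      mul_nonneg (mul_nonneg (by norm_num) (mul_pos hP hQ).le) (sq_nonneg _)
    have h5 := sq_nonneg (Qr*s11 - P*s22)
    linarith
  set sq : ℝ := Real.sqrt disc with hsqdef
  have hsq2 : sq^2 = disc := Real.sq_sqrt hdisc
  set r : ℝ := (a + sq) / (2*(1 + (Δ:ℝ))*((n:ℝ) - Δ - 1)) with hrdef
  have hden : 2*(1 + (Δ:ℝ))*((n:ℝ) - Δ - 1) = 2*(P*Qr) := by rw [hPdef, hQdef]; ring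
  have hPQ0 : (0:ℝ) < P*Qr := mul_pos hP hQ
  have h1 : sq^2 = a^2 + 4*b*(P*Qr) := by
    rw [hsq2, hdiscdef, hPdef, hQdef]; ring
  have hr2 : (2*(P*Qr)) * r = a + sq := by
    rw [hrdef, hden]
    field_simp
  have hroot : P*Qr*r^2 - a*r - b = 0 := by
    have h2 : ((2*(P*Qr))^2) * (P*Qr*r^2 - a*r - b) = ((2*(P*Qr))^2) * 0 := by
      linear_combination (P*Qr*(2*(P*Qr)*r + a + sq) - a*(2*(P*Qr))) * hr2 + (P*Qr) * h1
    have hK2 : ((2*(P*Qr))^2) ≠ 0 := by positivity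
    exact mul_left_cancel₀ hK2 h2
  have hker : (s11 - r*P) * (s22 - r*Qr) = s12^2 := by
    linear_combination hroot + r * ha' + hb'
  -- choose the test vector coefficients
  set A0 : ℝ := s11 - r*P with hA0
  set B0 : ℝ := s12 with hB0
  obtain ⟨α, β, hne, hQF0⟩ :
      ∃ α β : ℝ, ¬(α = 0 ∧ β = 0) ∧
        s11*α^2 + 2*s12*α*β + s22*β^2 = r*(P*α^2 + Qr*β^2) := by
    by_cases hAB : A0 = 0 ∧ B0 = 0
    · refine ⟨1, 0, by simp, ?_⟩
      have h1 : s11 = r*P := by have := hAB.1; rw [hA0] at this; linarith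
      rw [h1]; ring
    · refine ⟨B0, -A0, ?_, ?_⟩
      · intro ⟨h1, h2⟩
        exact hAB ⟨by linarith [neg_eq_zero.mp h2], h1⟩
      · have : (s11 - r*P) * (s22 - r*Qr) = s12^2 := hker
        rw [hA0, hB0]
        linear_combination (s11 - r*P) * this
  -- the test vector
  set y : V → ℝ := fun u => if u ∈ C then α else β with hy
  have hysum : ∀ g : V → ℝ, ∑ u, y u * g u
      = α * (∑ u ∈ C, g u) + β * (∑ u ∈ Cᶜ, g u) := by
    intro g
    rw [← Finset.sum_add_sum_compl C (fun u => y u * g u), Finset.mul_sum, Finset.mul_sum]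
    congr 1
    · exact Finset.sum_congr rfl fun u hu => by rw [hy]; simp [hu]
    · apply Finset.sum_congr rfl
      intro u hu
      rw [Finset.mem_compl] at hu
      rw [hy]; simp [hu]
  have hnorm : y ⬝ᵥ y = P*α^2 + Qr*β^2 := by
    rw [dotProduct, hysum y]
    have e1 : ∑ u ∈ C, y u = α * C.card := by
      rw [Finset.sum_congr rfl (fun u hu => by rw [hy]; simp [hu] : ∀ u ∈ C, y u = α)]
      rw [Finset.sum_const, nsmul_eq_mul]; ring
    have e2 : ∑ u ∈ Cᶜ, y u = β * Cᶜ.card := by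
      have : ∀ u ∈ Cᶜ, y u = β := by
        intro u hu; rw [Finset.mem_compl] at hu; rw [hy]; simp [hu]
      rw [Finset.sum_congr rfl this, Finset.sum_const, nsmul_eq_mul]; ring
    rw [e1, e2, hcardCR, hcardCc]
    ring
  have hmv : ∀ u : V, (distMatrix G).mulVec y u
      = α * (∑ w ∈ C, (G.dist u w:ℝ)) + β * (∑ w ∈ Cᶜ, (G.dist u w:ℝ)) := by
    intro u
    rw [Matrix.mulVec, dotProduct]
    rw [← Finset.sum_add_sum_compl C (fun w => distMatrix G u w * y w)]
    congr 1
    · rw [Finset.mul_sum]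
      apply Finset.sum_congr rfl
      intro w hw
      rw [hy]; simp [distMatrix, hw]; ring
    · rw [Finset.mul_sum]
      apply Finset.sum_congr rfl
      intro w hw
      rw [Finset.mem_compl] at hw
      rw [hy]; simp [distMatrix, hw]; ring
  have hform : y ⬝ᵥ (distMatrix G).mulVec y = s11*α^2 + 2*s12*α*β + s22*β^2 := by
    rw [dotProduct, hysum ((distMatrix G).mulVec y)]
    have e1 : ∑ u ∈ C, (distMatrix G).mulVec y u = α * s11 + β * s12 := by
      rw [Finset.sum_congr rfl (fun u _ => hmv u), Finset.sum_add_distrib,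
        ← Finset.mul_sum, ← Finset.mul_sum, ← hs11def, ← hs12def]
    have e2 : ∑ u ∈ Cᶜ, (distMatrix G).mulVec y u = α * s12 + β * s22 := by
      rw [Finset.sum_congr rfl (fun u _ => hmv u), Finset.sum_add_distrib,
        ← Finset.mul_sum, ← Finset.mul_sum, hs21, ← hs22def]
    rw [e1, e2]
    ring
  have hnormpos : 0 < y ⬝ᵥ y := by
    rw [hnorm]
    rcases not_and_or.mp hne with h | h
    · have h1 : 0 < P*α^2 := mul_pos hP (by positivity)
      have h2 : 0 ≤ Qr*β^2 := mul_nonneg hQ.le (sq_nonneg β)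
      linarith
    · have h1 : 0 < Qr*β^2 := mul_pos hQ (by positivity)
      have h2 : 0 ≤ P*α^2 := mul_nonneg hP.le (sq_nonneg α)
      linarith
  have hray := rayleigh_min (distMatrix_isHermitian G) y
  have hval : y ⬝ᵥ (distMatrix G).mulVec y = r * (y ⬝ᵥ y) := by
    rw [hform, hnorm, hQF0]
  rw [hval] at hray
  have : minEig (distMatrix_isHermitian G) * (y ⬝ᵥ y) ≤ r * (y ⬝ᵥ y) := hray
  exact le_of_mul_le_mul_right this hnormpos
end

section
/- Let G be a connected bipartite simple graph on n ≥ 3 vertices with maximum degree Δ ≤ n−2 and Wiener index W. For every vertex v of G with deg(v) = Δ, putting D_v = Tr_G(v), a = 4(W − D_v − t_v Δ)(Δ+1) + 2nΔ² + nD_v + n t_v Δ and b = 4D_v² + 8 D_v t_v Δ + 4 t_v² Δ² − 8WΔ² − 4W D_v − 4W t_v Δ, one has S_𝒬(G) ≥ √(a² + 4b(1+Δ)(n−Δ−1)) / ((1+Δ)(n−Δ−1)). -/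
open Finset Matrix

section AuxSpread

variable {V : Type*} [Fintype V] [DecidableEq V]

lemma quad_eq_sum' {A : Matrix V V ℝ} (hA : A.IsHermitian) (z : V → ℝ) :
    z ⬝ᵥ A *ᵥ z = ∑ j, hA.eigenvalues j *
      (((star (Matrix.IsHermitian.eigenvectorUnitary hA : Matrix V V ℝ)) *ᵥ z) j)^2 := by
  set U : Matrix V V ℝ := (Matrix.IsHermitian.eigenvectorUnitary hA : Matrix V V ℝ) with hU
  conv_lhs => rw [hA.spectral_theorem, Unitary.conjStarAlgAut_apply]
  rw [← hU, ← mulVec_mulVec, ← mulVec_mulVec, dotProduct_mulVec]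
  have h2 : z ᵥ* U = (star U) *ᵥ z := by
    rw [Matrix.star_eq_conjTranspose, Matrix.conjTranspose_eq_transpose_of_trivial,
      Matrix.mulVec_transpose]
  rw [h2]
  simp [dotProduct, mulVec_diagonal]
  exact Finset.sum_congr rfl fun x _ => by ring

lemma norm_eq_sum' {A : Matrix V V ℝ} (hA : A.IsHermitian) (z : V → ℝ) :
    ∑ j, (((star (Matrix.IsHermitian.eigenvectorUnitary hA : Matrix V V ℝ)) *ᵥ z) j)^2
      = z ⬝ᵥ z := by
  set U : Matrix V V ℝ := (Matrix.IsHermitian.eigenvectorUnitary hA : Matrix V V ℝ) with hU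
  have h2 : z ᵥ* U = (star U) *ᵥ z := by
    rw [Matrix.star_eq_conjTranspose, Matrix.conjTranspose_eq_transpose_of_trivial,
      Matrix.mulVec_transpose]
  have h3 : ∑ j, (((star U) *ᵥ z) j)^2 = ((star U) *ᵥ z) ⬝ᵥ ((star U) *ᵥ z) := by
    simp [dotProduct, sq]
  rw [h3]
  nth_rewrite 1 [← h2]
  rw [← dotProduct_mulVec, mulVec_mulVec,
    (Matrix.mem_unitaryGroup_iff).mp (Matrix.IsHermitian.eigenvectorUnitary hA).2, one_mulVec]

lemma rayleigh_le_max' [Nonempty V] {A : Matrix V V ℝ} (hA : A.IsHermitian) (z : V → ℝ)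
    (hz : z ⬝ᵥ z = 1) : z ⬝ᵥ A *ᵥ z ≤ ⨆ i, hA.eigenvalues i := by
  rw [quad_eq_sum' hA z]
  calc ∑ j, hA.eigenvalues j * _ ≤ ∑ j, (⨆ i, hA.eigenvalues i) *
      (((star (Matrix.IsHermitian.eigenvectorUnitary hA : Matrix V V ℝ)) *ᵥ z) j)^2 := by
        refine Finset.sum_le_sum fun j _ => ?_
        exact mul_le_mul_of_nonneg_right (le_ciSup (Set.Finite.bddAbove (Set.finite_range _)) j)
          (sq_nonneg _)
    _ = 1 * (⨆ i, hA.eigenvalues i) := by rw [← Finset.mul_sum, norm_eq_sum' hA z, hz]; ring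
    _ = _ := one_mul _

lemma min_le_rayleigh' [Nonempty V] {A : Matrix V V ℝ} (hA : A.IsHermitian) (z : V → ℝ)
    (hz : z ⬝ᵥ z = 1) : (⨅ i, hA.eigenvalues i) ≤ z ⬝ᵥ A *ᵥ z := by
  rw [quad_eq_sum' hA z]
  calc (⨅ i, hA.eigenvalues i) = 1 * (⨅ i, hA.eigenvalues i) := (one_mul _).symm
    _ = ∑ j, (⨅ i, hA.eigenvalues i) *
      (((star (Matrix.IsHermitian.eigenvectorUnitary hA : Matrix V V ℝ)) *ᵥ z) j)^2 := by
        rw [← Finset.mul_sum, norm_eq_sum' hA z, hz]; ring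
    _ ≤ _ := by
        refine Finset.sum_le_sum fun j _ => ?_
        exact mul_le_mul_of_nonneg_right (ciInf_le (Set.Finite.bddBelow (Set.finite_range _)) j)
          (sq_nonneg _)

lemma split_quad (A : Matrix V V ℝ) (S : Finset V) (e f : ℝ) :
    (fun u => if u ∈ S then e else f) ⬝ᵥ A *ᵥ (fun u => if u ∈ S then e else f)
    = e^2 * (∑ i ∈ S, ∑ j ∈ S, A i j)
      + e*f*((∑ i ∈ S, ∑ j ∈ Sᶜ, A i j) + (∑ i ∈ Sᶜ, ∑ j ∈ S, A i j))
      + f^2 * (∑ i ∈ Sᶜ, ∑ j ∈ Sᶜ, A i j) := by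
  set z : V → ℝ := fun u => if u ∈ S then e else f with hz
  have h1 : z ⬝ᵥ A *ᵥ z = ∑ i, ∑ j, z i * A i j * z j := by
    simp [dotProduct, mulVec, Finset.mul_sum, mul_assoc]
  have hS : ∀ i ∈ S, z i = e := fun i hi => by simp [hz, hi]
  have hSc : ∀ i ∈ Sᶜ, z i = f := fun i hi => by
    simp [hz, (Finset.mem_compl.mp hi)]
  have inner : ∀ (c : ℝ) (i : V), z i = c →
      ∑ j, z i * A i j * z j
        = c * (∑ j ∈ S, A i j) * e + c * (∑ j ∈ Sᶜ, A i j) * f := by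
    intro c i hc
    rw [← Finset.sum_add_sum_compl S (fun j => z i * A i j * z j)]
    have e1 : ∑ j ∈ S, z i * A i j * z j = c * (∑ j ∈ S, A i j) * e := by
      rw [Finset.mul_sum, Finset.sum_mul]
      exact Finset.sum_congr rfl fun j hj => by rw [hc, hS j hj]
    have e2 : ∑ j ∈ Sᶜ, z i * A i j * z j = c * (∑ j ∈ Sᶜ, A i j) * f := by
      rw [Finset.mul_sum, Finset.sum_mul]
      exact Finset.sum_congr rfl fun j hj => by rw [hc, hSc j hj]
    rw [e1, e2]
  have outer : ∑ i, ∑ j, z i * A i j * z j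
      = ∑ i ∈ S, (e * (∑ j ∈ S, A i j) * e + e * (∑ j ∈ Sᶜ, A i j) * f)
        + ∑ i ∈ Sᶜ, (f * (∑ j ∈ S, A i j) * e + f * (∑ j ∈ Sᶜ, A i j) * f) := by
    rw [← Finset.sum_add_sum_compl S (fun i => ∑ j, z i * A i j * z j)]
    congr 1
    · exact Finset.sum_congr rfl fun i hi => inner e i (hS i hi)
    · exact Finset.sum_congr rfl fun i hi => inner f i (hSc i hi)
  rw [h1, outer]
  simp only [Finset.sum_add_distrib]
  have hmul : ∀ (s t : Finset V) (x y : ℝ),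
      ∑ i ∈ s, x * (∑ j ∈ t, A i j) * y = x * y * ∑ i ∈ s, ∑ j ∈ t, A i j := by
    intro s t x y
    rw [Finset.mul_sum]
    exact Finset.sum_congr rfl fun i _ => by ring
  rw [hmul S S e e, hmul S Sᶜ e f, hmul Sᶜ S f e, hmul Sᶜ Sᶜ f f]
  ring

lemma split_dot (S : Finset V) (e f : ℝ) :
    (fun u => if u ∈ S then e else f) ⬝ᵥ (fun u => if u ∈ S then e else f)
    = e^2 * S.card + f^2 * Sᶜ.card := by
  simp only [dotProduct]
  rw [← Finset.sum_add_sum_compl S]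
  have e1 : ∑ i ∈ S, (if i ∈ S then e else f) * (if i ∈ S then e else f) = e^2 * S.card := by
    have h : ∀ i ∈ S, (if i ∈ S then e else f) * (if i ∈ S then e else f) = e^2 :=
      fun i hi => by simp [hi, sq]
    rw [Finset.sum_congr rfl h, Finset.sum_const, nsmul_eq_mul]; ring
  have e2 : ∑ i ∈ Sᶜ, (if i ∈ S then e else f) * (if i ∈ S then e else f) = f^2 * Sᶜ.card := by
    have h : ∀ i ∈ Sᶜ, (if i ∈ S then e else f) * (if i ∈ S then e else f) = f^2 :=
      fun i hi => by simp [Finset.mem_compl.mp hi, sq]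
    rw [Finset.sum_congr rfl h, Finset.sum_const, nsmul_eq_mul]; ring
  rw [e1, e2]

lemma fin2_eq_of_ne (a b c : Fin 2) (h1 : a ≠ c) (h2 : b ≠ c) : a = b := by
  fin_cases a <;> fin_cases b <;> fin_cases c <;> simp_all

end AuxSpread

set_option maxHeartbeats 1600000 in
theorem stmt4 {V : Type*} [Fintype V] [DecidableEq V] (G : SimpleGraph V) [DecidableRel G.Adj]
    (hconn : G.Connected) (hbip : G.Colorable 2)
    (n : ℕ) (hn : n = Fintype.card V) (hn3 : 3 ≤ n)
    (Δ : ℕ) (hΔ : G.maxDegree = Δ) (hΔn : Δ + 2 ≤ n)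
    (W : ℝ) (hW : W = (∑ u, transmission G u) / 2)
    (v : V) (hv : G.degree v = Δ)
    (Dv tv a b : ℝ)
    (hDv : Dv = transmission G v)
    (htv : tv = (∑ u ∈ G.neighborFinset v, transmission G u) / Δ)
    (ha : a = 4*(W - Dv - tv*Δ)*(Δ + 1) + 2*n*Δ^2 + n*Dv + n*tv*Δ)
    (hb : b = 4*Dv^2 + 8*Dv*tv*Δ + 4*tv^2*Δ^2 - 8*W*Δ^2 - 4*W*Dv - 4*W*tv*Δ) :
    Real.sqrt (a^2 + 4*b*(1 + Δ)*(n - Δ - 1)) / ((1 + Δ)*((n : ℝ) - Δ - 1)) ≤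
      distSLSpread G := by
  have hcard : 3 ≤ Fintype.card V := hn ▸ hn3
  haveI : Nonempty V := Fintype.card_pos_iff.mp (by omega)
  -- basic graph setup
  set N : Finset V := G.neighborFinset v with hN
  set S : Finset V := insert v N with hSdef
  have hvN : v ∉ N := by simp [hN, SimpleGraph.mem_neighborFinset]
  have hcardN : N.card = Δ := by rw [hN, SimpleGraph.card_neighborFinset_eq_degree, hv]
  have hcardS : S.card = Δ + 1 := by rw [hSdef, Finset.card_insert_of_notMem hvN, hcardN]
  have hΔ1 : 1 ≤ Δ := by
    obtain ⟨u, hu⟩ := Fintype.exists_ne_of_one_lt_card (by omega) v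
    obtain ⟨p⟩ := hconn.preconnected v u
    cases p with
    | nil => exact absurd rfl hu.symm
    | cons h q =>
      rw [← hv]
      have : 0 < G.degree v := G.degree_pos_iff_exists_adj v |>.mpr ⟨_, h⟩
      omega
  have hΔR : (Δ : ℝ) ≠ 0 := Nat.cast_ne_zero.mpr (by omega)
  -- distance facts
  have hadj : ∀ u ∈ N, G.Adj v u := fun u hu => by
    rw [hN, SimpleGraph.mem_neighborFinset] at hu; exact hu
  have hd1 : ∀ u ∈ N, G.dist v u = 1 := fun u hu =>
    SimpleGraph.dist_eq_one_iff_adj.mpr (hadj u hu)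
  obtain ⟨C⟩ := hbip
  have hnadj : ∀ u ∈ N, ∀ w ∈ N, ¬ G.Adj u w := by
    intro u hu w hw hadj'
    exact (C.valid hadj') (fin2_eq_of_ne (C u) (C w) (C v)
      (fun h => (C.valid (hadj u hu)) h.symm)
      (fun h => (C.valid (hadj w hw)) h.symm))
  have hd2 : ∀ u ∈ N, ∀ w ∈ N, u ≠ w → G.dist u w = 2 := by
    intro u hu w hw hne
    have hle : G.dist u w ≤ 2 := by
      have := hconn.dist_triangle (u := u) (v := v) (w := w)
      rw [SimpleGraph.dist_comm (G := G) (u := u) (v := v), hd1 u hu, hd1 w hw] at this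
      omega
    have hpos : 0 < G.dist u w := hconn.pos_dist_of_ne hne
    have hne1 : G.dist u w ≠ 1 := fun h =>
      hnadj u hu w hw (SimpleGraph.dist_eq_one_iff_adj.mp h)
    omega
  -- matrix entry facts
  set Q : Matrix V V ℝ := distSLMatrix G with hQdef
  have hQapp : ∀ i j, Q i j = (if i = j then transmission G i else 0) + (G.dist i j : ℝ) := by
    intro i j
    simp [hQdef, distSLMatrix, distMatrix, Matrix.add_apply, Matrix.diagonal_apply]
  have hQsymm : ∀ i j, Q i j = Q j i := by
    intro i j
    rw [hQapp, hQapp, SimpleGraph.dist_comm]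
    by_cases h : i = j
    · subst h; simp
    · simp [h, Ne.symm h]
  have hrow : ∀ i, ∑ j, Q i j = 2 * transmission G i := by
    intro i
    simp only [hQapp]
    rw [Finset.sum_add_distrib, Finset.sum_ite_eq Finset.univ i (fun _ => transmission G i)]
    simp [transmission, two_mul]
  -- block sums
  set SSd : ℝ := ∑ i ∈ S, ∑ j ∈ S, Q i j with hSSdef
  set STd : ℝ := ∑ i ∈ S, ∑ j ∈ Sᶜ, Q i j with hSTdef
  set TSd : ℝ := ∑ i ∈ Sᶜ, ∑ j ∈ S, Q i j with hTSdef
  set TTd : ℝ := ∑ i ∈ Sᶜ, ∑ j ∈ Sᶜ, Q i j with hTTdef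
  have hsumTS : ∑ i ∈ S, transmission G i = Dv + tv * Δ := by
    rw [hSdef, Finset.sum_insert hvN, ← hDv]
    congr 1
    rw [htv]; field_simp
  have hdiagSS : ∑ i ∈ S, ∑ j ∈ S, (if i = j then transmission G i else 0 : ℝ)
      = Dv + tv * Δ := by
    rw [← hsumTS]
    refine Finset.sum_congr rfl fun i hi => ?_
    rw [Finset.sum_ite_eq S i (fun _ => transmission G i), if_pos hi]
  have hdistSS : ∑ i ∈ S, ∑ j ∈ S, (G.dist i j : ℝ) = 2 * (Δ:ℝ)^2 := by
    rw [hSdef, Finset.sum_insert hvN]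
    have hvrow : ∑ j ∈ insert v N, (G.dist v j : ℝ) = (Δ:ℝ) := by
      rw [Finset.sum_insert hvN]
      have : ∀ j ∈ N, (G.dist v j : ℝ) = 1 := fun j hj => by rw [hd1 j hj]; norm_num
      rw [Finset.sum_congr rfl this]
      simp [hcardN]
    have hurow : ∀ i ∈ N, ∑ j ∈ insert v N, (G.dist i j : ℝ) = 2*(Δ:ℝ) - 1 := by
      intro i hi
      rw [Finset.sum_insert hvN]
      have h1 : (G.dist i v : ℝ) = 1 := by
        rw [SimpleGraph.dist_comm, hd1 i hi]; norm_num
      have h2 : ∀ j ∈ N, (G.dist i j : ℝ) = 2 - (if i = j then 2 else 0) := by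
        intro j hj
        by_cases h : i = j
        · subst h; simp
        · rw [hd2 i hi j hj h, if_neg h]; norm_num
      rw [h1, Finset.sum_congr rfl h2, Finset.sum_sub_distrib,
        Finset.sum_ite_eq N i (fun _ => (2:ℝ)), if_pos hi]
      simp [hcardN]; ring
    rw [hvrow, Finset.sum_congr rfl hurow, Finset.sum_const, nsmul_eq_mul, hcardN]
    ring
  have hSSval : SSd = (Dv + tv*Δ) + 2*(Δ:ℝ)^2 := by
    rw [hSSdef]
    have : ∀ i ∈ S, ∑ j ∈ S, Q i j
        = (∑ j ∈ S, (if i = j then transmission G i else 0)) + ∑ j ∈ S, (G.dist i j : ℝ) := by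
      intro i _
      rw [← Finset.sum_add_distrib]
      exact Finset.sum_congr rfl fun j _ => hQapp i j
    rw [Finset.sum_congr rfl this, Finset.sum_add_distrib, hdiagSS, hdistSS]
  have hrowsplit : ∀ i, ∑ j ∈ Sᶜ, Q i j = 2 * transmission G i - ∑ j ∈ S, Q i j := by
    intro i
    have := Finset.sum_add_sum_compl S (Q i)
    rw [hrow i] at this
    linarith
  have hSTval : STd = (Dv + tv*Δ) - 2*(Δ:ℝ)^2 := by
    rw [hSTdef, Finset.sum_congr rfl fun i (_ : i ∈ S) => hrowsplit i,
      Finset.sum_sub_distrib, ← Finset.mul_sum, hsumTS, ← hSSdef, hSSval]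
    ring
  have hTSval : TSd = STd := by
    rw [hTSdef, hSTdef]
    exact Finset.sum_comm.trans (Finset.sum_congr rfl fun j _ => Finset.sum_congr rfl fun i _ => hQsymm i j)
  have hsumTall : ∑ i, transmission G i = 2 * W := by rw [hW]; ring
  have hTTval : TTd = 4*W - 3*(Dv + tv*Δ) + 2*(Δ:ℝ)^2 := by
    have htot : SSd + STd + (TSd + TTd) = 4 * W := by
      rw [hSSdef, hSTdef, hTSdef, hTTdef, ← Finset.sum_add_distrib, ← Finset.sum_add_distrib]
      have h1 : ∀ i ∈ S, (∑ j ∈ S, Q i j) + (∑ j ∈ Sᶜ, Q i j) = 2 * transmission G i :=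
        fun i _ => by rw [Finset.sum_add_sum_compl S (Q i), hrow i]
      have h2 : ∀ i ∈ Sᶜ, (∑ j ∈ S, Q i j) + (∑ j ∈ Sᶜ, Q i j) = 2 * transmission G i :=
        fun i _ => by rw [Finset.sum_add_sum_compl S (Q i), hrow i]
      rw [Finset.sum_congr rfl h1, Finset.sum_congr rfl h2,
        Finset.sum_add_sum_compl S (fun i => 2 * transmission G i), ← Finset.mul_sum, hsumTall]
      ring
    rw [hSSval, hSTval, hTSval, hSTval] at htot
    linarith only [htot]
  -- cardinalities as reals
  have hnV : Fintype.card V = n := hn.symm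
  have hpcard : ((S.card : ℕ) : ℝ) = (Δ:ℝ) + 1 := by rw [hcardS]; push_cast; ring
  have hqcard : ((Sᶜ.card : ℕ) : ℝ) = (n:ℝ) - Δ - 1 := by
    rw [Finset.card_compl, hcardS, hnV, Nat.cast_sub (by omega)]
    push_cast; ring
  -- analytic part
  set p : ℝ := (Δ:ℝ) + 1 with hpdef
  set q : ℝ := (n:ℝ) - (Δ:ℝ) - 1 with hqdef
  have hp0 : 0 < p := by rw [hpdef]; positivity
  have hnR : (Δ:ℝ) + 2 ≤ (n:ℝ) := by exact_mod_cast hΔn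
  have hq0 : 0 < q := by rw [hqdef]; linarith only [hnR]
  have hpq0 : 0 < p * q := mul_pos hp0 hq0
  set u0 : ℝ := SSd/p - TTd/q with hu0def
  clear_value u0
  set γ : ℝ := STd / Real.sqrt (p*q) with hγdef
  clear_value γ
  set r : ℝ := Real.sqrt (u0^2 + 4*γ^2) with hrdef
  clear_value r
  have hγ2 : γ^2 = STd^2/(p*q) := by rw [hγdef, div_pow, Real.sq_sqrt hpq0.le]
  have key : a^2 + 4*b*(1 + (Δ:ℝ))*((n:ℝ) - (Δ:ℝ) - 1) = (p*q)^2 * (u0^2 + 4*γ^2) := by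
    have hpne : (Δ:ℝ) + 1 ≠ 0 := hp0.ne'
    have hqne : (n:ℝ) - (Δ:ℝ) - 1 ≠ 0 := hq0.ne'
    rw [ha, hb, hu0def, hγ2, hSSval, hTTval, hSTval, hpdef, hqdef]
    field_simp
    ring
  have hsqrt_eq : Real.sqrt (a^2 + 4*b*(1 + (Δ:ℝ))*((n:ℝ) - (Δ:ℝ) - 1)) = p * q * r := by
    rw [key, Real.sqrt_mul (sq_nonneg (p*q)), Real.sqrt_sq hpq0.le, hrdef]
  have hdenom : (1 + (Δ:ℝ)) * ((n:ℝ) - (Δ:ℝ) - 1) = p * q := by rw [hpdef, hqdef]; ring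
  have hspread : r ≤ distSLSpread G := by
    by_cases hr0 : u0^2 + 4*γ^2 = 0
    · have hr00 : r = 0 := by rw [hrdef, hr0, Real.sqrt_zero]
      rw [hr00]
      unfold distSLSpread maxEig minEig
      obtain ⟨i0⟩ := (inferInstance : Nonempty V)
      have h1 := ciInf_le (Set.Finite.bddBelow (Set.finite_range
        (distSLMatrix_isHermitian G).eigenvalues)) i0
      have h2 := le_ciSup (Set.Finite.bddAbove (Set.finite_range
        (distSLMatrix_isHermitian G).eigenvalues)) i0
      linarith only [h1, h2]
    · have h4γ : (0:ℝ) ≤ 4*γ^2 := mul_nonneg (by norm_num) (sq_nonneg γ)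
      have hX : 0 < u0^2 + 4*γ^2 :=
        lt_of_le_of_ne (add_nonneg (sq_nonneg u0) h4γ) (Ne.symm hr0)
      have hrpos : 0 < r := by rw [hrdef]; exact Real.sqrt_pos.mpr hX
      have hr2 : r^2 = u0^2 + 4*γ^2 := by rw [hrdef]; exact Real.sq_sqrt hX.le
      have habs : |u0| ≤ r := by
        rw [hrdef, ← Real.sqrt_sq_eq_abs]
        exact Real.sqrt_le_sqrt (le_add_of_nonneg_right h4γ)
      have hu0le : u0 ≤ r := (abs_le.mp habs).2
      have hu0ge : -r ≤ u0 := (abs_le.mp habs).1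
      set t : ℝ := u0 / r with htdef
      clear_value t
      have ht1 : t ≤ 1 := by rw [htdef]; exact (div_le_one hrpos).mpr hu0le
      have ht2 : -1 ≤ t := by
        rw [htdef, le_div_iff₀ hrpos]; linarith only [hu0ge]
      set c : ℝ := Real.sqrt ((1+t)/2) with hcdef
      clear_value c
      set sg : ℝ := if 0 ≤ γ then (1:ℝ) else -1 with hsgdef
      clear_value sg
      set s0 : ℝ := sg * Real.sqrt ((1-t)/2) with hs0def
      clear_value s0
      have hc2 : c^2 = (1+t)/2 := by rw [hcdef]; exact Real.sq_sqrt (by linarith only [ht2])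
      have hsg2 : sg^2 = 1 := by rw [hsgdef]; split_ifs <;> norm_num
      have hs02 : s0^2 = (1-t)/2 := by
        rw [hs0def, mul_pow, hsg2, one_mul, Real.sq_sqrt (by linarith only [ht1])]
      have hcs : 2*(c*s0) = 2*γ/r := by
        have h1 : ((1+t)/2)*((1-t)/2) = (γ/r)^2 := by
          rw [htdef]
          have hrne : r ≠ 0 := ne_of_gt hrpos
          field_simp
          linear_combination hr2
        have h2 : c * Real.sqrt ((1-t)/2) = |γ/r| := by
          rw [hcdef, ← Real.sqrt_mul (by linarith only [ht2]), h1, Real.sqrt_sq_eq_abs]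
        rw [hs0def, show c * (sg * Real.sqrt ((1-t)/2)) = sg * (c * Real.sqrt ((1-t)/2)) by ring,
          h2, hsgdef]
        rcases le_or_gt 0 γ with hγpos | hγneg
        · rw [if_pos hγpos, abs_of_nonneg (div_nonneg hγpos hrpos.le)]; ring
        · rw [if_neg (not_le.mpr hγneg), abs_of_neg (div_neg_of_neg_of_pos hγneg hrpos)]; ring
      set z : V → ℝ := fun x => if x ∈ S then c / Real.sqrt p else s0 / Real.sqrt q with hzdef
      set w : V → ℝ := fun x => if x ∈ S then (-s0) / Real.sqrt p else c / Real.sqrt q with hwdef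
      have hcsq : c^2 + s0^2 = 1 := by rw [hc2, hs02]; ring
      have he2 : ∀ x : ℝ, (x / Real.sqrt p)^2 = x^2 / p := fun x => by
        rw [div_pow, Real.sq_sqrt hp0.le]
      have hf2 : ∀ x : ℝ, (x / Real.sqrt q)^2 = x^2 / q := fun x => by
        rw [div_pow, Real.sq_sqrt hq0.le]
      have hef : ∀ x y : ℝ, (x / Real.sqrt p) * (y / Real.sqrt q) = (x*y) / Real.sqrt (p*q) :=
        fun x y => by rw [div_mul_div_comm, Real.sqrt_mul hp0.le]
      have hzunit : z ⬝ᵥ z = 1 := by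
        rw [hzdef, split_dot S, he2, hf2, hpcard, hqcard,
          div_mul_cancel₀ _ hp0.ne', div_mul_cancel₀ _ hq0.ne']
        exact hcsq
      have hwunit : w ⬝ᵥ w = 1 := by
        rw [hwdef, split_dot S, he2, hf2, hpcard, hqcard,
          div_mul_cancel₀ _ hp0.ne', div_mul_cancel₀ _ hq0.ne']
        linear_combination hcsq
      have hzQ : z ⬝ᵥ Q *ᵥ z = c^2 * (SSd/p) + 2*(c*s0)*γ + s0^2 * (TTd/q) := by
        rw [hzdef, split_quad Q S, he2, hf2, hef, ← hSSdef, ← hSTdef, ← hTSdef, ← hTTdef,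
          hTSval, hγdef]
        ring
      have hwQ : w ⬝ᵥ Q *ᵥ w = s0^2 * (SSd/p) - 2*(c*s0)*γ + c^2 * (TTd/q) := by
        rw [hwdef, split_quad Q S, he2, hf2, hef, ← hSSdef, ← hSTdef, ← hTSdef, ← hTTdef,
          hTSval, hγdef]
        ring
      have hdiff : z ⬝ᵥ Q *ᵥ z - w ⬝ᵥ Q *ᵥ w = r := by
        rw [hzQ, hwQ]
        have hcs2 : c^2 - s0^2 = t := by rw [hc2, hs02]; ring
        have hstep : c^2*(SSd/p) + 2*(c*s0)*γ + s0^2*(TTd/q)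
            - (s0^2*(SSd/p) - 2*(c*s0)*γ + c^2*(TTd/q))
            = (c^2-s0^2)*u0 + 2*(2*(c*s0))*γ := by rw [hu0def]; ring
        rw [hstep, hcs2, hcs, htdef]
        field_simp
        linear_combination (-1 : ℝ) * hr2
      have h1 := rayleigh_le_max' (distSLMatrix_isHermitian G) z hzunit
      have h2 := min_le_rayleigh' (distSLMatrix_isHermitian G) w hwunit
      have h3 : z ⬝ᵥ distSLMatrix G *ᵥ z - w ⬝ᵥ distSLMatrix G *ᵥ w = r := hdiff
      unfold distSLSpread maxEig minEig
      linarith only [h1, h2, h3]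
  calc Real.sqrt (a^2 + 4*b*(1 + (Δ:ℝ))*((n:ℝ) - (Δ:ℝ) - 1)) / ((1 + (Δ:ℝ)) * ((n:ℝ) - (Δ:ℝ) - 1))
      = (p * q * r) / (p * q) := by rw [hsqrt_eq, hdenom]
    _ = r := by field_simp
    _ ≤ distSLSpread G := hspread
end

section
/- Let G be a connected bipartite simple graph on n ≥ 3 vertices with maximum degree Δ ≤ n−2 and Wiener index W. For every vertex v of G with deg(v) = Δ, putting D_v = Tr_G(v), a = 4(W − D_v − t_v Δ)(Δ+1) + 2nΔ² + nD_v + n t_v Δ and b = 4D_v² + 8 D_v t_v Δ + 4 t_v² Δ² − 8WΔ² − 4W D_v − 4W t_v Δ, the largest distance signless Laplacian eigenvalue satisfies q^𝒟(G) ≥ (a + √(a² + 4b(1+Δ)(n−Δ−1))) / (2(1+Δ)(n−Δ−1)). -/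
open Finset Matrix

theorem rayleigh {V : Type*} [Fintype V] [DecidableEq V] [Nonempty V] {A : Matrix V V ℝ}
    (hA : A.IsHermitian) (x : V → ℝ) :
    x ⬝ᵥ (A *ᵥ x) ≤ maxEig hA * (x ⬝ᵥ x) := by
  have hspec := hA.spectral_theorem
  set U : Matrix V V ℝ := (hA.eigenvectorUnitary : Matrix V V ℝ) with hU
  have hUs : star U = Uᵀ := by
    ext i j; simp [Matrix.star_eq_conjTranspose, Matrix.conjTranspose_apply]
  have hUU : U * star U = 1 := Matrix.mem_unitaryGroup_iff.mp hA.eigenvectorUnitary.2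
  set y : V → ℝ := (star U) *ᵥ x with hy
  have hxy : vecMul x U = y := by
    rw [hy, ← mulVec_transpose, hUs]
  have h1 : x ⬝ᵥ (A *ᵥ x) = ∑ i, hA.eigenvalues i * (y i)^2 := by
    conv_lhs => rw [hspec, Unitary.conjStarAlgAut_apply]
    rw [← mulVec_mulVec, ← mulVec_mulVec, dotProduct_mulVec, hxy]
    simp only [dotProduct, mulVec_diagonal, Function.comp_apply, RCLike.ofReal_real_eq_id, id_eq]
    congr 1; ext i; ring
  have h2 : x ⬝ᵥ x = ∑ i, (y i)^2 := by
    have key : y ⬝ᵥ y = x ⬝ᵥ x := by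
      conv_lhs => rw [hy]
      rw [show (star U) *ᵥ x = x ᵥ* U from by rw [← mulVec_transpose, hUs]]
      rw [← dotProduct_mulVec, ← mulVec_transpose, ← hUs, mulVec_mulVec, hUU, one_mulVec]
    rw [← key]; simp [dotProduct, sq]
  rw [h1, h2, Finset.mul_sum]
  apply Finset.sum_le_sum
  intro i _
  have hle : hA.eigenvalues i ≤ maxEig hA :=
    le_ciSup (Set.Finite.bddAbove (Set.finite_range _)) i
  nlinarith [sq_nonneg (y i)]


lemma core_aux (θ m k P S C : ℝ)
    (hQF : ∀ α β : ℝ, P*α^2 + 2*C*(α*β) + S*β^2 ≤ θ*(m*α^2 + k*β^2))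
    (hC1 : 1 ≤ C) :
    P ≤ m*θ ∧ S ≤ k*θ ∧ P + 2*C + S ≤ θ*(m+k) ∧ C^2 ≤ (m*θ - P)*(k*θ - S) := by
  have hA : P ≤ m*θ := by have := hQF 1 0; nlinarith [this]
  have hB : S ≤ k*θ := by have := hQF 0 1; nlinarith [this]
  have h4 : P + 2*C + S ≤ θ*(m+k) := by have := hQF 1 1; nlinarith [this]
  refine ⟨hA, hB, h4, ?_⟩
  rcases eq_or_lt_of_le (by linarith : (0:ℝ) ≤ m*θ - P) with h0 | hpos
  · exfalso
    have hP : P = m*θ := by linarith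
    have hB2 := hQF (k*θ - S) 1
    rw [hP] at hB2
    have h2C : 2*C*(k*θ - S) ≤ (k*θ - S) := by nlinarith [hB2]
    have hBC : 2*C ≤ k*θ - S := by nlinarith [h4, hP]
    have hBpos : (0:ℝ) < k*θ - S := by linarith
    have hprod : (0:ℝ) < (k*θ - S)*(2*C - 1) :=
      mul_pos hBpos (by linarith)
    nlinarith [h2C, hprod]
  · have hq := hQF C (m*θ - P)
    have key : C^2*(m*θ - P) ≤ ((m*θ - P)*(k*θ - S))*(m*θ - P) := by nlinarith [hq]
    exact le_of_mul_le_mul_right key hpos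

lemma finish_aux (θ m k P S C σ T1 W a b ΔR : ℝ)
    (hA : P ≤ m*θ) (hB : S ≤ k*θ)
    (h4 : P + 2*C + S ≤ θ*(m+k))
    (hAB : C^2 ≤ (m*θ - P)*(k*θ - S))
    (hm1 : 1 ≤ m) (hk1 : 1 ≤ k)
    (hPdef : P = T1 + σ)
    (hCdef : C = T1 - σ)
    (hSdef : S = 4*W - 3*T1 + σ)
    (hσ : 2*ΔR^2 ≤ σ)
    (hm : m = ΔR + 1)
    (ha : a = 4*(W - T1)*(ΔR + 1) + 2*(m+k)*ΔR^2 + (m+k)*T1)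
    (hb : b = 4*T1^2 - 4*W*T1 - 8*W*ΔR^2) :
    (a + Real.sqrt (a^2 + 4*b*m*k)) / (2*m*k) ≤ θ := by
  have hW4 : P + 2*C + S = 4*W := by rw [hPdef, hCdef, hSdef]; ring
  have h4W : 4*W ≤ (m+k)*θ := by nlinarith [h4]
  have hquad : 0 ≤ m*k*θ^2 - a*θ - b := by
    have hident : m*k*θ^2 - a*θ - b
        = (m*θ - P)*(k*θ - S) - C^2 + (σ - 2*ΔR^2)*((m+k)*θ - 4*W) := by
      rw [ha, hb, hPdef, hCdef, hSdef, hm]; ring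
    rw [hident]
    have hx := mul_nonneg (by linarith : (0:ℝ) ≤ σ - 2*ΔR^2)
      (by linarith : (0:ℝ) ≤ (m+k)*θ - 4*W)
    nlinarith [hAB, hx]
  have hk0 : (0:ℝ) ≤ k := by linarith
  have hm0 : (0:ℝ) ≤ m := by linarith
  have haθ : a ≤ 2*(m*k)*θ := by
    have ha' : a = k*(T1 + 2*ΔR^2) + m*(4*W - 3*T1 + 2*ΔR^2) := by rw [ha, hm]; ring
    have e1 : k*(T1 + 2*ΔR^2) ≤ k*P :=
      mul_le_mul_of_nonneg_left (by rw [hPdef]; linarith) hk0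
    have e2 : m*(4*W - 3*T1 + 2*ΔR^2) ≤ m*S :=
      mul_le_mul_of_nonneg_left (by rw [hSdef]; linarith) hm0
    have e3 : k*P ≤ k*(m*θ) := mul_le_mul_of_nonneg_left hA hk0
    have e4 : m*S ≤ m*(k*θ) := mul_le_mul_of_nonneg_left hB hm0
    rw [ha']
    nlinarith [e1, e2, e3, e4]
  have hmk : (0:ℝ) < m*k := by nlinarith
  rw [div_le_iff₀ (by linarith : (0:ℝ) < 2*m*k)]
  have hbound : a^2 + 4*b*m*k ≤ (2*(m*k)*θ - a)^2 := by
    nlinarith [mul_nonneg (le_of_lt hmk) hquad]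
  have hsq : Real.sqrt (a^2 + 4*b*m*k) ≤ 2*(m*k)*θ - a :=
    calc Real.sqrt (a^2 + 4*b*m*k)
        ≤ Real.sqrt ((2*(m*k)*θ - a)^2) := Real.sqrt_le_sqrt hbound
      _ = 2*(m*k)*θ - a := Real.sqrt_sq (by linarith)
  nlinarith [hsq]

set_option maxHeartbeats 1000000 in
theorem stmt6 {V : Type*} [Fintype V] [DecidableEq V] (G : SimpleGraph V) [DecidableRel G.Adj]
    (hconn : G.Connected) (hbip : G.Colorable 2)
    (n : ℕ) (hn : n = Fintype.card V) (hn3 : 3 ≤ n)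
    (Δ : ℕ) (hΔ : G.maxDegree = Δ) (hΔn : Δ + 2 ≤ n)
    (W : ℝ) (hW : W = (∑ u, transmission G u) / 2)
    (v : V) (hv : G.degree v = Δ)
    (Dv tv a b : ℝ)
    (hDv : Dv = transmission G v)
    (htv : tv = (∑ u ∈ G.neighborFinset v, transmission G u) / Δ)
    (ha : a = 4*(W - Dv - tv*Δ)*(Δ + 1) + 2*n*Δ^2 + n*Dv + n*tv*Δ)
    (hb : b = 4*Dv^2 + 8*Dv*tv*Δ + 4*tv^2*Δ^2 - 8*W*Δ^2 - 4*W*Dv - 4*W*tv*Δ) :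
    (a + Real.sqrt (a^2 + 4*b*(1 + Δ)*(n - Δ - 1))) / (2*(1 + Δ)*((n : ℝ) - Δ - 1)) ≤
      maxEig (distSLMatrix_isHermitian G) := by
  classical
  have hVcard : 3 ≤ Fintype.card V := hn ▸ hn3
  haveI : Nonempty V := Fintype.card_pos_iff.mp (by omega)
  haveI : Nontrivial V := Fintype.one_lt_card_iff_nontrivial.mp (by omega)
  -- Δ is positive
  have hΔpos : 0 < Δ := by
    rw [← hv, SimpleGraph.degree_pos_iff_exists_adj]
    obtain ⟨u, hu⟩ := exists_ne v
    obtain ⟨p⟩ := hconn v u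
    cases p with
    | nil => exact absurd rfl hu
    | cons h q => exact ⟨_, h⟩
  set θ : ℝ := maxEig (distSLMatrix_isHermitian G) with hθdef
  set N : Finset V := G.neighborFinset v with hNdef
  have hvN : v ∉ N := by simp [hNdef]
  set V1 : Finset V := insert v N with hV1def
  have hNcard : N.card = Δ := by rw [hNdef, SimpleGraph.card_neighborFinset_eq_degree, hv]
  have hV1card : V1.card = Δ + 1 := by
    rw [hV1def, Finset.card_insert_of_notMem hvN, hNcard]
  have hV2card : ((V1ᶜ : Finset V).card : ℝ) = (n : ℝ) - Δ - 1 := by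
    rw [Finset.card_compl, hV1card, ← hn]
    have : Δ + 1 ≤ n := by omega
    push_cast [Nat.cast_sub this]
    ring
  -- distance facts
  obtain ⟨c⟩ := hbip
  have two_color : ∀ x y z : Fin 2, x ≠ z → y ≠ z → x = y := by decide
  have hdist1 : ∀ u ∈ N, G.dist v u = 1 := by
    intro u hu
    exact SimpleGraph.dist_eq_one_iff_adj.mpr (by simpa [hNdef] using hu)
  have hdistNN : ∀ u ∈ N, ∀ w ∈ N, u ≠ w → 2 ≤ G.dist u w := by
    intro u hu w hw huw
    have hadju : G.Adj v u := by simpa [hNdef] using hu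
    have hadjw : G.Adj v w := by simpa [hNdef] using hw
    have hcol : c u = c w := two_color _ _ (c v) (c.valid hadju.symm) (c.valid hadjw.symm)
    have h1 : 0 < G.dist u w := hconn.pos_dist_of_ne huw
    have h2 : G.dist u w ≠ 1 := by
      intro h
      exact c.valid (SimpleGraph.dist_eq_one_iff_adj.mp h) hcol
    omega
  have hdistpos : ∀ u w : V, u ≠ w → 1 ≤ G.dist u w := fun u w h => hconn.pos_dist_of_ne h
  -- block sums
  set σ : ℝ := ∑ u ∈ V1, ∑ w ∈ V1, (G.dist u w : ℝ) with hσdef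
  set C : ℝ := ∑ u ∈ V1, ∑ w ∈ V1ᶜ, (G.dist u w : ℝ) with hCdef
  set S2 : ℝ := ∑ u ∈ V1ᶜ, ∑ w ∈ V1ᶜ, (G.dist u w : ℝ) with hS2def
  set T1 : ℝ := ∑ u ∈ V1, transmission G u with hT1def
  set T2 : ℝ := ∑ u ∈ V1ᶜ, transmission G u with hT2def
  have hT1 : T1 = Dv + tv * Δ := by
    have hΔR : (Δ : ℝ) ≠ 0 := by positivity
    have htv' : tv * Δ = ∑ u ∈ N, transmission G u := by
      rw [htv]; field_simp
    rw [hT1def, hV1def, Finset.sum_insert hvN, ← hDv, htv']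
  have hT12 : T1 + T2 = 2 * W := by
    rw [hT1def, hT2def, Finset.sum_add_sum_compl, hW]; ring
  have hPC : T1 = σ + C := by
    rw [hT1def, hσdef, hCdef, ← Finset.sum_add_distrib]
    exact Finset.sum_congr rfl fun u _ => (Finset.sum_add_sum_compl V1 _).symm
  have hSC : T2 = C + S2 := by
    have hCswap : C = ∑ u ∈ V1ᶜ, ∑ w ∈ V1, (G.dist u w : ℝ) := by
      rw [hCdef, Finset.sum_comm]
      exact Finset.sum_congr rfl fun u _ => Finset.sum_congr rfl fun w _ => by
        rw [SimpleGraph.dist_comm]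
    rw [hT2def, hCswap, hS2def, ← Finset.sum_add_distrib]
    exact Finset.sum_congr rfl fun u _ => (Finset.sum_add_sum_compl V1 _).symm
  -- sigma lower bound
  have hσlb : 2 * (Δ : ℝ)^2 ≤ σ := by
    have inner_bound : ∀ u ∈ N, (2 : ℝ) * (Δ - 1) ≤ ∑ w ∈ N, (G.dist u w : ℝ) := by
      intro u hu
      have : ∑ w ∈ N, (if w = u then (0:ℝ) else 2) ≤ ∑ w ∈ N, (G.dist u w : ℝ) := by
        apply Finset.sum_le_sum
        intro w hw
        by_cases hwu : w = u
        · simp [hwu]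
        · simp only [if_neg hwu]
          have := hdistNN u hu w hw (Ne.symm hwu)
          exact_mod_cast this
      have hsplit : ∑ w ∈ N, (if w = u then (0:ℝ) else 2)
          = (∑ w ∈ N, (2:ℝ)) - ∑ w ∈ N, (if w = u then (2:ℝ) else 0) := by
        rw [← Finset.sum_sub_distrib]
        refine Finset.sum_congr rfl fun w _ => ?_
        by_cases hwu : w = u <;> simp [hwu]
      have hone : ∑ w ∈ N, (if w = u then (2:ℝ) else 0) = 2 := by
        rw [Finset.sum_ite_eq' N u (fun _ => (2:ℝ))]
        simp [hu]
      calc (2:ℝ) * (Δ - 1) = ∑ w ∈ N, (if w = u then (0:ℝ) else 2) := by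
            rw [hsplit, hone, Finset.sum_const, hNcard, nsmul_eq_mul]
            have : (1:ℝ) ≤ (Δ:ℝ) := by exact_mod_cast hΔpos
            ring
        _ ≤ _ := this
    have hrow_v : ∑ w ∈ V1, (G.dist v w : ℝ) = Δ := by
      rw [hV1def, Finset.sum_insert hvN]
      rw [show G.dist v v = 0 from SimpleGraph.dist_self]
      have : ∀ w ∈ N, (G.dist v w : ℝ) = 1 := fun w hw => by
        rw [hdist1 w hw]; norm_num
      rw [Finset.sum_congr rfl this, Finset.sum_const, hNcard]
      simp
    have hrow_u : ∀ u ∈ N, (1 : ℝ) + 2 * (Δ - 1) ≤ ∑ w ∈ V1, (G.dist u w : ℝ) := by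
      intro u hu
      rw [hV1def, Finset.sum_insert hvN]
      have h1 : (G.dist u v : ℝ) = 1 := by
        rw [SimpleGraph.dist_comm, hdist1 u hu]; norm_num
      rw [h1]
      linarith [inner_bound u hu]
    rw [hσdef, hV1def, Finset.sum_insert hvN, ← hV1def]
    have hsum : ∑ u ∈ N, ((1:ℝ) + 2 * (Δ - 1)) ≤ ∑ u ∈ N, ∑ w ∈ V1, (G.dist u w : ℝ) :=
      Finset.sum_le_sum hrow_u
    rw [Finset.sum_const, hNcard, nsmul_eq_mul] at hsum
    have hΔ1 : (1:ℝ) ≤ Δ := by exact_mod_cast hΔpos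
    rw [hrow_v]
    nlinarith [hsum]
  -- C lower bound
  have hC1 : (1 : ℝ) ≤ C := by
    have hV2ne : (V1ᶜ : Finset V).Nonempty := by
      rw [← Finset.card_pos, Finset.card_compl, hV1card, ← hn]
      omega
    obtain ⟨w0, hw0⟩ := hV2ne
    have hw0v : w0 ≠ v := by
      intro h
      subst h
      simp [hV1def] at hw0
    have hterm : (1:ℝ) ≤ ∑ w ∈ V1ᶜ, (G.dist v w : ℝ) := by
      have : (1:ℝ) ≤ (G.dist v w0 : ℝ) := by
        exact_mod_cast hdistpos v w0 (Ne.symm hw0v)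
      calc (1:ℝ) ≤ (G.dist v w0 : ℝ) := this
        _ ≤ ∑ w ∈ V1ᶜ, (G.dist v w : ℝ) :=
            Finset.single_le_sum (f := fun w => (G.dist v w : ℝ))
              (fun w _ => by positivity) hw0
    have hvV1 : v ∈ V1 := Finset.mem_insert_self v N
    rw [hCdef]
    calc (1:ℝ) ≤ ∑ w ∈ V1ᶜ, (G.dist v w : ℝ) := hterm
      _ ≤ ∑ u ∈ V1, ∑ w ∈ V1ᶜ, (G.dist u w : ℝ) :=
          Finset.single_le_sum (f := fun u => ∑ w ∈ V1ᶜ, (G.dist u w : ℝ))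
            (fun u _ => Finset.sum_nonneg fun w _ => by positivity) hvV1
  -- Rayleigh quotient inequality for two-valued vectors
  have hQF : ∀ α β : ℝ,
      (T1 + σ) * α^2 + 2 * C * (α * β) + (T2 + S2) * β^2 ≤
        θ * (((Δ : ℝ) + 1) * α^2 + ((n : ℝ) - Δ - 1) * β^2) := by
    intro α β
    set x : V → ℝ := fun u => if u ∈ V1 then α else β with hx
    have hray := rayleigh (distSLMatrix_isHermitian G) x
    have e0 : ∀ u, ((distSLMatrix G) *ᵥ x) u
        = transmission G u * x u + ∑ w, (G.dist u w : ℝ) * x w := by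
      intro u
      simp only [distSLMatrix, Matrix.add_mulVec, Pi.add_apply, Matrix.mulVec_diagonal]
      simp [distMatrix, Matrix.mulVec, dotProduct]
    have e1 : x ⬝ᵥ ((distSLMatrix G) *ᵥ x)
        = (∑ u, transmission G u * (x u)^2)
          + ∑ u, ∑ w, (G.dist u w : ℝ) * (x u * x w) := by
      simp only [dotProduct, e0, mul_add, Finset.mul_sum, Finset.sum_add_distrib]
      congr 1
      · exact Finset.sum_congr rfl fun u _ => by ring
      · exact Finset.sum_congr rfl fun u _ => Finset.sum_congr rfl fun w _ => by ring
    have hxV1 : ∀ u ∈ V1, x u = α := fun u hu => by simp [hx, hu]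
    have hxV2 : ∀ u ∈ (V1ᶜ : Finset V), x u = β := fun u hu => by
      simp only [hx]
      rw [if_neg (Finset.mem_compl.mp hu)]
    have s1 : ∑ u, transmission G u * (x u)^2 = T1 * α^2 + T2 * β^2 := by
      rw [← Finset.sum_add_sum_compl V1, hT1def, hT2def, Finset.sum_mul, Finset.sum_mul]
      congr 1
      · exact Finset.sum_congr rfl fun u hu => by rw [hxV1 u hu]
      · exact Finset.sum_congr rfl fun u hu => by rw [hxV2 u hu]
    have s2 : ∑ u, ∑ w, (G.dist u w : ℝ) * (x u * x w)
        = σ * α^2 + 2 * C * (α * β) + S2 * β^2 := by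
      have inner : ∀ u, ∑ w, (G.dist u w : ℝ) * (x u * x w)
          = (∑ w ∈ V1, (G.dist u w : ℝ)) * (x u * α)
            + (∑ w ∈ V1ᶜ, (G.dist u w : ℝ)) * (x u * β) := by
        intro u
        rw [← Finset.sum_add_sum_compl V1, Finset.sum_mul, Finset.sum_mul]
        congr 1
        · exact Finset.sum_congr rfl fun w hw => by rw [hxV1 w hw]
        · exact Finset.sum_congr rfl fun w hw => by rw [hxV2 w hw]
      simp only [inner]
      rw [← Finset.sum_add_sum_compl V1, Finset.sum_add_distrib, Finset.sum_add_distrib]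
      have p11 : ∑ u ∈ V1, (∑ w ∈ V1, (G.dist u w : ℝ)) * (x u * α) = σ * α^2 := by
        rw [hσdef, Finset.sum_mul]
        refine Finset.sum_congr rfl fun u hu => ?_
        rw [hxV1 u hu]; try ring
      have p12 : ∑ u ∈ V1, (∑ w ∈ V1ᶜ, (G.dist u w : ℝ)) * (x u * β) = C * (α * β) := by
        rw [hCdef, Finset.sum_mul]
        refine Finset.sum_congr rfl fun u hu => ?_
        rw [hxV1 u hu]; try ring
      have p21 : ∑ u ∈ V1ᶜ, (∑ w ∈ V1, (G.dist u w : ℝ)) * (x u * α) = C * (α * β) := by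
        have hCswap : C = ∑ u ∈ V1ᶜ, ∑ w ∈ V1, (G.dist u w : ℝ) := by
          rw [hCdef, Finset.sum_comm]
          exact Finset.sum_congr rfl fun u _ => Finset.sum_congr rfl fun w _ => by
            rw [SimpleGraph.dist_comm]
        rw [hCswap, Finset.sum_mul]
        refine Finset.sum_congr rfl fun u hu => ?_
        rw [hxV2 u hu]; try ring
      have p22 : ∑ u ∈ V1ᶜ, (∑ w ∈ V1ᶜ, (G.dist u w : ℝ)) * (x u * β) = S2 * β^2 := by
        rw [hS2def, Finset.sum_mul]
        refine Finset.sum_congr rfl fun u hu => ?_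
        rw [hxV2 u hu]; try ring
      rw [p11, p12, p21, p22]; ring
    have s3 : x ⬝ᵥ x = ((Δ : ℝ) + 1) * α^2 + ((n : ℝ) - Δ - 1) * β^2 := by
      simp only [dotProduct]
      rw [← Finset.sum_add_sum_compl V1]
      have q1 : ∑ u ∈ V1, x u * x u = ((Δ : ℝ) + 1) * α^2 := by
        rw [Finset.sum_congr rfl (fun u hu => by rw [hxV1 u hu] : ∀ u ∈ V1, x u * x u = α * α)]
        rw [Finset.sum_const, hV1card]
        push_cast; ring
      have q2 : ∑ u ∈ (V1ᶜ : Finset V), x u * x u = ((n : ℝ) - Δ - 1) * β^2 := by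
        rw [Finset.sum_congr rfl
          (fun u hu => by rw [hxV2 u hu] : ∀ u ∈ (V1ᶜ : Finset V), x u * x u = β * β)]
        rw [Finset.sum_const, nsmul_eq_mul, hV2card]
        ring
      rw [q1, q2]
    rw [e1, s1, s2, s3] at hray
    calc (T1 + σ) * α^2 + 2 * C * (α * β) + (T2 + S2) * β^2
        = (T1 * α^2 + T2 * β^2) + (σ * α^2 + 2 * C * (α * β) + S2 * β^2) := by ring
      _ ≤ θ * (((Δ : ℝ) + 1) * α^2 + ((n : ℝ) - Δ - 1) * β^2) := hray
  -- assemble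
  clear_value θ σ C S2 T1 T2
  have hm1 : (1:ℝ) ≤ (Δ:ℝ) + 1 := by
    have : (0:ℝ) ≤ (Δ:ℝ) := Nat.cast_nonneg Δ
    linarith
  have hk1 : (1:ℝ) ≤ (n:ℝ) - Δ - 1 := by
    have : (Δ:ℝ) + 2 ≤ (n:ℝ) := by exact_mod_cast hΔn
    linarith
  obtain ⟨hA, hB, h4, hAB⟩ :=
    core_aux θ ((Δ:ℝ)+1) ((n:ℝ)-Δ-1) (T1+σ) (T2+S2) C hQF hC1
  have hCeq : C = T1 - σ := by linarith
  have hSeq2 : T2 + S2 = 4*W - 3*T1 + σ := by linarith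
  have ha' : a = 4*(W - T1)*((Δ:ℝ) + 1)
      + 2*(((Δ:ℝ)+1)+((n:ℝ)-Δ-1))*(Δ:ℝ)^2 + (((Δ:ℝ)+1)+((n:ℝ)-Δ-1))*T1 := by
    rw [ha, hT1]; ring
  have hb' : b = 4*T1^2 - 4*W*T1 - 8*W*(Δ:ℝ)^2 := by
    rw [hb, hT1]; ring
  have hfin := finish_aux θ ((Δ:ℝ)+1) ((n:ℝ)-Δ-1) (T1+σ) (T2+S2) C σ T1 W a b (Δ:ℝ)
    hA hB h4 hAB hm1 hk1 rfl hCeq hSeq2 hσlb rfl ha' hb'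
  have hgoal1 : (1 + (Δ:ℝ)) = (Δ:ℝ) + 1 := by ring
  rw [hgoal1]
  exact hfin
end

section
/- Let G be a connected bipartite simple graph on n ≥ 3 vertices with maximum degree Δ ≤ n−2 and Wiener index W. For every vertex v of G with deg(v) = Δ, putting D_v = Tr_G(v), a = 4(W − D_v − t_v Δ)(Δ+1) + 2nΔ² + nD_v + n t_v Δ and b = 4D_v² + 8 D_v t_v Δ + 4 t_v² Δ² − 8WΔ² − 4W D_v − 4W t_v Δ, the least distance signless Laplacian eigenvalue satisfies q^𝒟_min(G) ≤ (a + √(a² + 4b(1+Δ)(n−Δ−1))) / (2(1+Δ)(n−Δ−1)). -/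
open Finset Matrix

lemma rayleigh_min_le {V : Type*} [Fintype V] [DecidableEq V] [Nonempty V] {A : Matrix V V ℝ}
    (hA : A.IsHermitian) (y : V → ℝ) :
    minEig hA * (y ⬝ᵥ y) ≤ y ⬝ᵥ (A *ᵥ y) := by
  classical
  set U : Matrix V V ℝ := (hA.eigenvectorUnitary : Matrix V V ℝ) with hUdef
  have hsU : star U = Uᵀ := by
    ext i j; simp [Matrix.star_apply]
  have hUU : U * Uᵀ = 1 := by
    have := (Matrix.mem_unitaryGroup_iff).mp hA.eigenvectorUnitary.2
    rwa [hsU] at this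
  set z : V → ℝ := Uᵀ *ᵥ y with hz
  have hzvm : y ᵥ* U = z := by rw [hz, Matrix.mulVec_transpose]
  have hyz : y ⬝ᵥ y = z ⬝ᵥ z := by
    conv_lhs => rw [show y ⬝ᵥ y = y ⬝ᵥ ((1 : Matrix V V ℝ) *ᵥ y) by rw [Matrix.one_mulVec]]
    rw [← hUU, ← Matrix.mulVec_mulVec, Matrix.dotProduct_mulVec, hzvm, hz]
  have hmain : y ⬝ᵥ (A *ᵥ y) = ∑ i, hA.eigenvalues i * (z i * z i) := by
    conv_lhs => rw [hA.spectral_theorem, Unitary.conjStarAlgAut_apply]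
    rw [← Matrix.mulVec_mulVec, ← Matrix.mulVec_mulVec, Matrix.dotProduct_mulVec, hzvm, hsU, ← hz]
    simp [dotProduct, Matrix.mulVec_diagonal]
    apply Finset.sum_congr rfl
    intro i _
    ring
  rw [hmain, hyz]
  have hz2 : z ⬝ᵥ z = ∑ i, z i * z i := rfl
  rw [hz2, Finset.mul_sum]
  apply Finset.sum_le_sum
  intro i _
  have hle : minEig hA ≤ hA.eigenvalues i := ciInf_le (Set.finite_range _).bddBelow i
  nlinarith [mul_self_nonneg (z i)]

set_option maxHeartbeats 2000000 in
theorem stmt7 {V : Type*} [Fintype V] [DecidableEq V] (G : SimpleGraph V) [DecidableRel G.Adj]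
    (hconn : G.Connected) (hbip : G.Colorable 2)
    (n : ℕ) (hn : n = Fintype.card V) (hn3 : 3 ≤ n)
    (Δ : ℕ) (hΔ : G.maxDegree = Δ) (hΔn : Δ + 2 ≤ n)
    (W : ℝ) (hW : W = (∑ u, transmission G u) / 2)
    (v : V) (hv : G.degree v = Δ)
    (Dv tv a b : ℝ)
    (hDv : Dv = transmission G v)
    (htv : tv = (∑ u ∈ G.neighborFinset v, transmission G u) / Δ)
    (ha : a = 4*(W - Dv - tv*Δ)*(Δ + 1) + 2*n*Δ^2 + n*Dv + n*tv*Δ)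
    (hb : b = 4*Dv^2 + 8*Dv*tv*Δ + 4*tv^2*Δ^2 - 8*W*Δ^2 - 4*W*Dv - 4*W*tv*Δ) :
    minEig (distSLMatrix_isHermitian G) ≤
      (a + Real.sqrt (a^2 + 4*b*(1 + Δ)*(n - Δ - 1))) / (2*(1 + Δ)*((n : ℝ) - Δ - 1)) := by
  classical
  have hcardV : 3 ≤ Fintype.card V := hn ▸ hn3
  haveI : Nonempty V := Fintype.card_pos_iff.mp (by omega)
  -- Δ ≥ 1
  have hΔpos : 0 < Δ := by
    rw [← hv, SimpleGraph.degree_pos_iff_exists_adj]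
    obtain ⟨w, hwv⟩ := Fintype.exists_ne_of_one_lt_card (by omega) v
    have h0 : G.dist v w ≠ 0 := (hconn.pos_dist_of_ne (Ne.symm hwv)).ne'
    obtain ⟨p, hp⟩ := SimpleGraph.exists_walk_of_dist_ne_zero h0
    cases p with
    | nil => exact absurd rfl hwv
    | cons h q => exact ⟨_, h⟩
  have hΔR : ((Δ:ℝ)) ≠ 0 := by exact_mod_cast hΔpos.ne'
  set N := G.neighborFinset v with hN
  have hvN : v ∉ N := SimpleGraph.notMem_neighborFinset_self G v
  have hcardN : N.card = Δ := by rw [hN, SimpleGraph.card_neighborFinset_eq_degree, hv]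
  have hadj : ∀ u ∈ N, G.Adj v u := fun u hu => (SimpleGraph.mem_neighborFinset G v u).mp hu
  have hd1 : ∀ u ∈ N, G.dist v u = 1 := fun u hu =>
    SimpleGraph.dist_eq_one_iff_adj.mpr (hadj u hu)
  have hd1' : ∀ u ∈ N, G.dist u v = 1 := fun u hu => by
    rw [SimpleGraph.dist_comm]; exact hd1 u hu
  obtain ⟨C⟩ := hbip
  have hdist2 : ∀ u ∈ N, ∀ w ∈ N, u ≠ w → G.dist u w = 2 := by
    intro u hu w hw huw
    have hnadj : ¬ G.Adj u w := by
      intro h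
      have h1 := C.valid (hadj u hu)
      have h2 := C.valid (hadj w hw)
      have h3 := C.valid h
      revert h1 h2 h3
      generalize C v = x; generalize C u = y; generalize C w = zz
      revert x y zz; decide
    have hle : G.dist u w ≤ 2 := by
      have := SimpleGraph.dist_le
        (SimpleGraph.Walk.cons ((hadj u hu).symm) (SimpleGraph.Walk.cons (hadj w hw) SimpleGraph.Walk.nil))
      simpa using this
    have h0 : G.dist u w ≠ 0 := (hconn.pos_dist_of_ne huw).ne'
    have h1 : G.dist u w ≠ 1 := fun h => hnadj (SimpleGraph.dist_eq_one_iff_adj.mp h)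
    omega
  -- transmission sum over closed neighborhood
  have htrS : ∑ u ∈ insert v N, transmission G u = Dv + tv * Δ := by
    rw [Finset.sum_insert hvN, ← hDv]
    congr 1
    rw [htv, div_mul_cancel₀ _ hΔR]
  -- distance double sum
  have hrowv : ∑ w ∈ insert v N, (G.dist v w : ℝ) = Δ := by
    rw [Finset.sum_insert hvN]
    have h1 : ∑ w ∈ N, (G.dist v w : ℝ) = ∑ w ∈ N, 1 :=
      Finset.sum_congr rfl (fun w hw => by rw [hd1 w hw]; norm_num)
    rw [h1, Finset.sum_const, hcardN]
    simp [SimpleGraph.dist_self]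
  have hrowu : ∀ u ∈ N, ∑ w ∈ insert v N, (G.dist u w : ℝ) = 1 + 2*((Δ:ℝ) - 1) := by
    intro u hu
    rw [Finset.sum_insert hvN, hd1' u hu]
    have h1 : ∑ w ∈ N, (G.dist u w : ℝ) = ∑ w ∈ N.erase u, (G.dist u w : ℝ) := by
      rw [← Finset.add_sum_erase N _ hu]
      simp [SimpleGraph.dist_self]
    have h2 : ∑ w ∈ N.erase u, (G.dist u w : ℝ) = ∑ w ∈ N.erase u, 2 :=
      Finset.sum_congr rfl (fun w hw => by
        rw [hdist2 u hu w (Finset.mem_of_mem_erase hw) (Finset.ne_of_mem_erase hw).symm]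
        norm_num)
    rw [h1, h2, Finset.sum_const, Finset.card_erase_of_mem hu, hcardN]
    have h3 : ((Δ - 1 : ℕ) : ℝ) = (Δ:ℝ) - 1 := by
      rw [Nat.cast_sub hΔpos]; norm_num
    rw [nsmul_eq_mul, h3]
    push_cast
    ring
  have hdd : ∑ u ∈ insert v N, ∑ w ∈ insert v N, (G.dist u w : ℝ) = 2*(Δ:ℝ)^2 := by
    rw [Finset.sum_insert hvN, hrowv]
    have h1 : ∑ u ∈ N, ∑ w ∈ insert v N, (G.dist u w : ℝ)
        = ∑ u ∈ N, (1 + 2*((Δ:ℝ) - 1)) :=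
      Finset.sum_congr rfl (fun u hu => hrowu u hu)
    rw [h1, Finset.sum_const, hcardN, nsmul_eq_mul]
    ring
  -- the indicator vector
  set χ : V → ℝ := fun u => if u ∈ insert v N then 1 else 0 with hχ
  have key : ∀ M : Matrix V V ℝ,
      χ ⬝ᵥ (M *ᵥ χ) = ∑ u ∈ insert v N, ∑ w ∈ insert v N, M u w := by
    intro M
    simp only [hχ, dotProduct, Matrix.mulVec, dotProduct, ite_mul, mul_ite,
      one_mul, mul_one, zero_mul, mul_zero, Finset.sum_ite_mem, Finset.univ_inter]
  have hnorm : χ ⬝ᵥ χ = (Δ:ℝ) + 1 := by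
    have : χ ⬝ᵥ χ = ∑ u ∈ insert v N, (1:ℝ) := by
      simp only [hχ, dotProduct, ite_mul, mul_ite, one_mul, mul_one, zero_mul, mul_zero,
        Finset.sum_ite_mem, Finset.univ_inter]
      simp
    rw [this, Finset.sum_const, Finset.card_insert_of_notMem hvN, hcardN, nsmul_eq_mul]
    push_cast; ring
  have hform : χ ⬝ᵥ (distSLMatrix G *ᵥ χ) = (Dv + tv*Δ) + 2*(Δ:ℝ)^2 := by
    rw [key (distSLMatrix G)]
    have hsplit : ∀ u ∈ insert v N, ∀ w ∈ insert v N,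
        distSLMatrix G u w = (if u = w then transmission G u else 0) + (G.dist u w : ℝ) := by
      intro u _ w _
      simp [distSLMatrix, distMatrix, Matrix.add_apply, Matrix.diagonal_apply]
    calc ∑ u ∈ insert v N, ∑ w ∈ insert v N, distSLMatrix G u w
        = ∑ u ∈ insert v N, ∑ w ∈ insert v N,
            ((if u = w then transmission G u else 0) + (G.dist u w : ℝ)) := by
          exact Finset.sum_congr rfl fun u hu => Finset.sum_congr rfl fun w hw => hsplit u hu w hw
      _ = (∑ u ∈ insert v N, ∑ w ∈ insert v N, (if u = w then transmission G u else 0))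
            + ∑ u ∈ insert v N, ∑ w ∈ insert v N, (G.dist u w : ℝ) := by
          rw [← Finset.sum_add_distrib]
          exact Finset.sum_congr rfl fun u hu => by rw [← Finset.sum_add_distrib]
      _ = (Dv + tv*Δ) + 2*(Δ:ℝ)^2 := by
          rw [hdd]
          congr 1
          rw [← htrS]
          exact Finset.sum_congr rfl fun u hu => by
            rw [Finset.sum_ite_eq (insert v N) u (fun w => transmission G u), if_pos hu]
  -- Rayleigh
  have hray := rayleigh_min_le (distSLMatrix_isHermitian G) χ
  rw [hform, hnorm] at hray
  -- algebra
  set μ := minEig (distSLMatrix_isHermitian G) with hμ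
  set s : ℝ := Dv + tv*Δ with hs
  set p : ℝ := (s + 2*(Δ:ℝ)^2)/((Δ:ℝ)+1) with hp
  have hXpos : (0:ℝ) < (Δ:ℝ) + 1 := by positivity
  have hYpos : (0:ℝ) < (n:ℝ) - Δ - 1 := by
    have : (Δ:ℝ) + 2 ≤ (n:ℝ) := by exact_mod_cast hΔn
    linarith
  have hmup : μ ≤ p := by
    rw [hp, le_div_iff₀ hXpos]
    linarith [hray]
  have hident : ((Δ:ℝ)+1)*((n:ℝ)-Δ-1)*p^2 - a*p - b = -(s - 2*(Δ:ℝ)^2)^2 := by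
    rw [hp, hs, ha, hb]
    field_simp
    ring
  have hb2 : b = ((Δ:ℝ)+1)*((n:ℝ)-Δ-1)*p^2 - a*p + (s - 2*(Δ:ℝ)^2)^2 := by linarith
  have hkey : (2*(((Δ:ℝ)+1)*((n:ℝ)-Δ-1))*p - a)^2 ≤ a^2 + 4*b*((1+(Δ:ℝ))*((n:ℝ)-Δ-1)) := by
    rw [hb2]
    nlinarith [mul_nonneg (mul_nonneg hXpos.le hYpos.le) (sq_nonneg (s - 2*(Δ:ℝ)^2))]
  have harg : a^2 + 4*b*(1+(Δ:ℝ))*((n:ℝ)-(Δ:ℝ)-1) = a^2 + 4*b*((1+(Δ:ℝ))*((n:ℝ)-Δ-1)) := by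
    ring
  have hsq : 2*(((Δ:ℝ)+1)*((n:ℝ)-Δ-1))*p - a
      ≤ Real.sqrt (a^2 + 4*b*(1+(Δ:ℝ))*((n:ℝ)-(Δ:ℝ)-1)) := by
    rcases le_or_gt (2*(((Δ:ℝ)+1)*((n:ℝ)-Δ-1))*p - a) 0 with h|h
    · exact h.trans (Real.sqrt_nonneg _)
    · rw [harg]
      calc 2*(((Δ:ℝ)+1)*((n:ℝ)-Δ-1))*p - a
          = Real.sqrt ((2*(((Δ:ℝ)+1)*((n:ℝ)-Δ-1))*p - a)^2) := (Real.sqrt_sq h.le).symm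
        _ ≤ _ := Real.sqrt_le_sqrt hkey
  have hden : (0:ℝ) < 2*(1+(Δ:ℝ))*((n:ℝ)-Δ-1) := by
    have := mul_pos hXpos hYpos
    nlinarith
  rw [le_div_iff₀ hden]
  have hchain : μ * (2*(1+(Δ:ℝ))*((n:ℝ)-Δ-1)) ≤ p * (2*(1+(Δ:ℝ))*((n:ℝ)-Δ-1)) :=
    mul_le_mul_of_nonneg_right hmup hden.le
  have heq : p * (2*(1+(Δ:ℝ))*((n:ℝ)-Δ-1)) = 2*(((Δ:ℝ)+1)*((n:ℝ)-Δ-1))*p := by ring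
  calc μ * (2*(1+(Δ:ℝ))*((n:ℝ)-Δ-1)) ≤ p * (2*(1+(Δ:ℝ))*((n:ℝ)-Δ-1)) := hchain
    _ = 2*(((Δ:ℝ)+1)*((n:ℝ)-Δ-1))*p := heq
    _ ≤ a + Real.sqrt (a^2 + 4*b*(1+(Δ:ℝ))*((n:ℝ)-(Δ:ℝ)-1)) := by linarith [hsq]
end

section
/- Let a, b ≥ 1 be integers and n = a + b. The multiset of eigenvalues of the distance matrix 𝒟(K_{a,b}) of the complete bipartite graph K_{a,b} consists of −2 with multiplicity n−2, together with the two simple eigenvalues n−2+√(n²−3ab) and n−2−√(n²−3ab). -/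
open Finset Matrix

/-! ### Auxiliary lemmas -/

open Polynomial

section CharpolyAux

lemma charpoly_conj_gen {m : Type*} [Fintype m] [DecidableEq m] (P Q B : Matrix m m ℝ)
    (h1 : P * Q = 1) : (P * B * Q).charpoly = B.charpoly := by
  have hX : (Matrix.diagonal fun _ : m => (X : ℝ[X])) = (X : ℝ[X]) • (1 : Matrix m m ℝ[X]) := by
    rw [Matrix.smul_eq_diagonal_mul, mul_one]
  have key : charmatrix (P * B * Q) = (P.map C) * charmatrix B * (Q.map C) := by
    rw [charmatrix, charmatrix, Matrix.mul_sub, Matrix.sub_mul]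
    simp only [RingHom.mapMatrix_apply, Matrix.scalar_apply]
    congr 1
    · rw [hX, Matrix.mul_smul, mul_one, Matrix.smul_mul,
        ← Matrix.map_mul, h1, Matrix.map_one _ (map_zero C) (map_one C)]
    · rw [Matrix.map_mul, Matrix.map_mul]
  rw [Matrix.charpoly, Matrix.charpoly, key, det_mul, det_mul]
  have : (P.map C).det * (charmatrix B).det * (Q.map C).det
      = ((P * Q).map C).det * (charmatrix B).det := by
    rw [Matrix.map_mul, det_mul]; ring
  rw [this, h1, Matrix.map_one _ (map_zero C) (map_one C), det_one, one_mul]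

lemma charpoly_diagonal_gen {m : Type*} [Fintype m] [DecidableEq m] (d : m → ℝ) :
    (Matrix.diagonal d).charpoly = ∏ i, (X - C (d i)) := by
  have : charmatrix (Matrix.diagonal d) = Matrix.diagonal fun i => X - C (d i) := by
    ext i j
    by_cases h : i = j <;>
      simp [charmatrix, Matrix.scalar_apply, Matrix.diagonal_apply, h]
  rw [Matrix.charpoly, this, det_diagonal]

lemma charpoly_eq_prod_eigenvalues {m : Type*} [Fintype m] [DecidableEq m]
    {A : Matrix m m ℝ} (hA : A.IsHermitian) :
    A.charpoly = ∏ i, (X - C (hA.eigenvalues i)) := by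
  have hU1 : (hA.eigenvectorUnitary : Matrix m m ℝ) * star (hA.eigenvectorUnitary : Matrix m m ℝ)
      = 1 := Matrix.mem_unitaryGroup_iff.mp hA.eigenvectorUnitary.2
  have hdiag : (RCLike.ofReal ∘ hA.eigenvalues : m → ℝ) = hA.eigenvalues := by
    funext i; simp
  conv_lhs => rw [hA.spectral_theorem, Unitary.conjStarAlgAut_apply]
  rw [hdiag, charpoly_conj_gen _ _ _ hU1, charpoly_diagonal_gen]

lemma eig_multiset_eq_roots {m : Type*} [Fintype m] [DecidableEq m]
    {A : Matrix m m ℝ} (hA : A.IsHermitian) :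
    Multiset.map hA.eigenvalues Finset.univ.val = A.charpoly.roots := by
  rw [charpoly_eq_prod_eigenvalues hA, ← roots_multiset_prod_X_sub_C
    (Multiset.map hA.eigenvalues Finset.univ.val)]
  congr 1
  rw [Multiset.map_map]
  rfl

lemma eval_charpoly_gen {m : Type*} [Fintype m] [DecidableEq m] (A : Matrix m m ℝ) (x : ℝ) :
    A.charpoly.eval x = (x • (1 : Matrix m m ℝ) - A).det := by
  rw [Matrix.charpoly, ← Polynomial.coe_evalRingHom, RingHom.map_det]
  congr 1
  ext i j
  by_cases h : i = j <;>
    simp [charmatrix, Matrix.scalar_apply, Matrix.one_apply, h, Matrix.diagonal_apply]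

end CharpolyAux

section KabAux

variable {a b : ℕ}

lemma kab_dist_lr (i : Fin a) (j : Fin b) :
    (completeBipartiteGraph (Fin a) (Fin b)).dist (Sum.inl i) (Sum.inr j) = 1 :=
  SimpleGraph.dist_eq_one_iff_adj.mpr (by simp)

lemma kab_dist_rl (j : Fin b) (i : Fin a) :
    (completeBipartiteGraph (Fin a) (Fin b)).dist (Sum.inr j) (Sum.inl i) = 1 :=
  SimpleGraph.dist_eq_one_iff_adj.mpr (by simp)

lemma kab_dist_ll (hb : 1 ≤ b) (i j : Fin a) (hij : i ≠ j) :
    (completeBipartiteGraph (Fin a) (Fin b)).dist (Sum.inl i) (Sum.inl j) = 2 := by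
  set G := completeBipartiteGraph (Fin a) (Fin b)
  have hadj1 : G.Adj (Sum.inl i) (Sum.inr ⟨0, hb⟩) := by simp [G]
  have hadj2 : G.Adj (Sum.inr ⟨0, hb⟩) (Sum.inl j) := by simp [G]
  have hle : G.dist (Sum.inl i) (Sum.inl j) ≤ 2 := by
    have := SimpleGraph.dist_le ((SimpleGraph.Walk.cons hadj1
      (SimpleGraph.Walk.cons hadj2 SimpleGraph.Walk.nil)))
    simpa using this
  have hne : G.dist (Sum.inl i) (Sum.inl j) ≠ 0 := by
    intro h
    rw [SimpleGraph.dist_eq_zero_iff_eq_or_not_reachable] at h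
    rcases h with h | h
    · exact hij (by simpa using h)
    · exact h ⟨(SimpleGraph.Walk.cons hadj1
        (SimpleGraph.Walk.cons hadj2 SimpleGraph.Walk.nil))⟩
  have hne1 : G.dist (Sum.inl i) (Sum.inl j) ≠ 1 := by
    intro h
    rw [SimpleGraph.dist_eq_one_iff_adj] at h
    simp [G] at h
  omega

lemma kab_dist_rr (ha : 1 ≤ a) (i j : Fin b) (hij : i ≠ j) :
    (completeBipartiteGraph (Fin a) (Fin b)).dist (Sum.inr i) (Sum.inr j) = 2 := by
  set G := completeBipartiteGraph (Fin a) (Fin b)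
  have hadj1 : G.Adj (Sum.inr i) (Sum.inl ⟨0, ha⟩) := by simp [G]
  have hadj2 : G.Adj (Sum.inl ⟨0, ha⟩) (Sum.inr j) := by simp [G]
  have hle : G.dist (Sum.inr i) (Sum.inr j) ≤ 2 := by
    have := SimpleGraph.dist_le ((SimpleGraph.Walk.cons hadj1
      (SimpleGraph.Walk.cons hadj2 SimpleGraph.Walk.nil)))
    simpa using this
  have hne : G.dist (Sum.inr i) (Sum.inr j) ≠ 0 := by
    intro h
    rw [SimpleGraph.dist_eq_zero_iff_eq_or_not_reachable] at h
    rcases h with h | h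
    · exact hij (by simpa using h)
    · exact h ⟨(SimpleGraph.Walk.cons hadj1
        (SimpleGraph.Walk.cons hadj2 SimpleGraph.Walk.nil))⟩
  have hne1 : G.dist (Sum.inr i) (Sum.inr j) ≠ 1 := by
    intro h
    rw [SimpleGraph.dist_eq_one_iff_adj] at h
    simp [G] at h
  omega

lemma kab_det_eval (ha : 1 ≤ a) (hb : 1 ≤ b) (x : ℝ) (hx : x + 2 ≠ 0) :
    (x • (1 : Matrix (Fin a ⊕ Fin b) (Fin a ⊕ Fin b) ℝ)
        - distMatrix (completeBipartiteGraph (Fin a) (Fin b))).det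
      = (x + 2) ^ (a + b) *
        (1 - 2*(a+b)*(x+2)⁻¹ + 3*a*b*((x+2)⁻¹)^2) := by
  set c : ℝ := (x+2)⁻¹ with hc
  have hcx : (x + 2) * c = 1 := mul_inv_cancel₀ hx
  set Amat : Matrix (Fin a ⊕ Fin b) (Fin 2) ℝ :=
    Matrix.of (Sum.elim (fun _ => ![1, 0]) (fun _ => ![0, 1])) with hA
  set Bmat : Matrix (Fin 2) (Fin a ⊕ Fin b) ℝ :=
    Matrix.of ![Sum.elim (fun _ => -c*2) (fun _ => -c*1),
                Sum.elim (fun _ => -c*1) (fun _ => -c*2)] with hB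
  have key : x • (1 : Matrix (Fin a ⊕ Fin b) (Fin a ⊕ Fin b) ℝ)
        - distMatrix (completeBipartiteGraph (Fin a) (Fin b))
      = (x + 2) • (1 + Amat * Bmat) := by
    ext u v
    have hABe : ∀ u v, (Amat * Bmat) u v = ∑ i : Fin 2, Amat u i * Bmat i v := fun u v => rfl
    rcases u with i | i <;> rcases v with j | j <;>
      simp only [Matrix.sub_apply, Matrix.smul_apply, Matrix.add_apply, hABe,
        Fin.sum_univ_two, hA, hB, Matrix.of_apply, Sum.elim_inl, Sum.elim_inr,
        Matrix.cons_val_zero, Matrix.cons_val_one, Matrix.head_cons, smul_eq_mul,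
        distMatrix, Matrix.one_apply, Matrix.mul_apply]
    · by_cases h : i = j
      · subst h
        rw [if_pos rfl, SimpleGraph.dist_self]
        push_cast
        linear_combination 2*hcx
      · rw [if_neg (show Sum.inl i ≠ Sum.inl j by simp [h]), kab_dist_ll hb i j h]
        push_cast
        linear_combination 2*hcx
    · rw [if_neg (by simp), kab_dist_lr]
      push_cast
      linear_combination hcx
    · rw [if_neg (by simp), kab_dist_rl]
      push_cast
      linear_combination hcx
    · by_cases h : i = j
      · subst h
        rw [if_pos rfl, SimpleGraph.dist_self]
        push_cast
        linear_combination 2*hcx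
      · rw [if_neg (show Sum.inr i ≠ Sum.inr j by simp [h]), kab_dist_rr ha i j h]
        push_cast
        linear_combination 2*hcx
  rw [key, Matrix.det_smul, Matrix.det_one_add_mul_comm]
  have hBA : (1 : Matrix (Fin 2) (Fin 2) ℝ) + Bmat * Amat
      = !![1 - 2*a*c, -(c*b); -(c*a), 1 - 2*b*c] := by
    have hmul : ∀ i j : Fin 2, (Bmat * Amat) i j
        = (∑ v : Fin a, Bmat i (Sum.inl v) * Amat (Sum.inl v) j)
          + ∑ v : Fin b, Bmat i (Sum.inr v) * Amat (Sum.inr v) j := by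
      intro i j
      rw [Matrix.mul_apply, Fintype.sum_sum_type]
    ext i j
    fin_cases i <;> fin_cases j <;>
      · rw [Matrix.add_apply, hmul]
        simp [hA, hB, Matrix.one_apply, Finset.sum_const, Finset.card_univ]
        ring
  rw [hBA, Matrix.det_fin_two_of]
  have hcard : Fintype.card (Fin a ⊕ Fin b) = a + b := by simp
  rw [hcard]
  ring

end KabAux

theorem stmt8 (a b : ℕ) (ha : 1 ≤ a) (hb : 1 ≤ b) (n : ℕ) (hn : n = a + b) :
    Multiset.map (distMatrix_isHermitian (completeBipartiteGraph (Fin a) (Fin b))).eigenvalues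
        Finset.univ.val =
      Multiset.replicate (n - 2) (-2 : ℝ) +
        {(n : ℝ) - 2 + Real.sqrt ((n : ℝ)^2 - 3*a*b),
         (n : ℝ) - 2 - Real.sqrt ((n : ℝ)^2 - 3*a*b)} := by
  have hn2 : 2 ≤ n := by omega
  have hncast : (n : ℝ) = (a : ℝ) + b := by rw [hn]; push_cast; ring
  set s : ℝ := Real.sqrt ((n : ℝ)^2 - 3*a*b) with hsdef
  have hnonneg : (0:ℝ) ≤ (n : ℝ)^2 - 3*a*b := by
    rw [hncast]
    nlinarith [sq_nonneg ((a:ℝ) - b)]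
  have hs : s^2 = (n : ℝ)^2 - 3*a*b := Real.sq_sqrt hnonneg
  set lam1 : ℝ := (n : ℝ) - 2 + s with hl1
  set lam2 : ℝ := (n : ℝ) - 2 - s with hl2
  set M : Multiset ℝ := Multiset.replicate (n - 2) (-2 : ℝ) + {lam1, lam2} with hM
  set D := distMatrix (completeBipartiteGraph (Fin a) (Fin b)) with hD
  have hprod : (M.map fun r => X - C r).prod
      = (X - C (-2))^(n-2) * ((X - C lam1) * (X - C lam2)) := by
    rw [hM, Multiset.map_add, Multiset.prod_add, Multiset.map_replicate,
      Multiset.prod_replicate]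
    congr 1
    simp
  have hchar : D.charpoly = (M.map fun r => X - C r).prod := by
    apply Polynomial.eq_of_infinite_eval_eq
    apply Set.Infinite.mono (s := {(-2 : ℝ)}ᶜ)
    · intro x hx
      have hx2 : x + 2 ≠ 0 := by
        intro h
        exact hx (by simp only [Set.mem_singleton_iff]; linarith)
      have hev : eval x D.charpoly = (x • 1 - D).det := eval_charpoly_gen D x
      show eval x D.charpoly = _
      rw [hev, hD, kab_det_eval ha hb x hx2, hprod]
      rw [eval_mul, eval_mul, eval_pow, eval_sub, eval_sub, eval_sub, eval_X, eval_C,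
        eval_C, eval_C]
      have hxp : x - (-2) = x + 2 := by ring
      rw [hxp]
      have hpowsplit : (x + 2) ^ (a + b) = (x + 2) ^ (n - 2) * (x + 2)^2 := by
        rw [← pow_add]
        congr 1
        omega
      rw [hpowsplit, mul_assoc]
      congr 1
      have hexp : (x - lam1) * (x - lam2) = (x - ((n:ℝ) - 2))^2 - s^2 := by
        rw [hl1, hl2]; ring
      rw [hexp, hs, hncast]
      field_simp
      ring
    · exact Set.Finite.infinite_compl (Set.finite_singleton _)
  rw [eig_multiset_eq_roots, ← hD, hchar, Polynomial.roots_multiset_prod_X_sub_C]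
end

section
/- Let n ≥ 4 and a be integers with 1 ≤ a ≤ n/2. Then the largest eigenvalue of the distance signless Laplacian of the complete bipartite graph K_{a,n−a} is q^𝒟(K_{a,n−a}) = (5n − 8 + √(9n² − 32a(n−a)))/2. -/
open Finset Matrix

lemma exists_eigenvalue_eq {V : Type*} [Fintype V] [DecidableEq V]
    {A : Matrix V V ℝ} (hA : A.IsHermitian) {x : V → ℝ} (hx : x ≠ 0)
    {μ : ℝ} (h : A *ᵥ x = μ • x) : ∃ i, hA.eigenvalues i = μ := by
  classical
  set U : Matrix V V ℝ := (hA.eigenvectorUnitary : Matrix V V ℝ) with hUdef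
  have hU1 : U * star U = 1 := Matrix.mem_unitaryGroup_iff.mp hA.eigenvectorUnitary.2
  have hU2 : star U * U = 1 := Matrix.mem_unitaryGroup_iff'.mp hA.eigenvectorUnitary.2
  set y := star U *ᵥ x with hy
  have hxy : U *ᵥ y = x := by rw [hy, mulVec_mulVec, hU1, one_mulVec]
  have hy0 : y ≠ 0 := by
    intro h0
    exact hx (by rw [← hxy, h0, mulVec_zero])
  have hcoe : Matrix.diagonal (RCLike.ofReal ∘ hA.eigenvalues) = Matrix.diagonal hA.eigenvalues := by
    congr 1
  have hspec : A = U * Matrix.diagonal hA.eigenvalues * star U := by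
    rw [hUdef, ← hcoe]; exact hA.spectral_theorem
  have h2 : (U * Matrix.diagonal hA.eigenvalues * star U) *ᵥ x = μ • x := hspec ▸ h
  rw [← mulVec_mulVec, ← mulVec_mulVec] at h2
  have hdiag : Matrix.diagonal hA.eigenvalues *ᵥ y = μ • y := by
    have h3 := congrArg (fun z => star U *ᵥ z) h2
    simp only [mulVec_mulVec, ← Matrix.mul_assoc] at h3
    rw [hU2, Matrix.one_mul, ← mulVec_mulVec, mulVec_smul] at h3
    exact h3
  obtain ⟨i, hi⟩ := Function.ne_iff.mp hy0
  refine ⟨i, ?_⟩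
  have h4 := congrFun hdiag i
  rw [Matrix.mulVec_diagonal] at h4
  have h5 : (hA.eigenvalues i - μ) * y i = 0 := by
    have h6 : (μ • y) i = μ * y i := rfl
    rw [h6] at h4; ring_nf; linarith [h4]
  rcases mul_eq_zero.mp h5 with h5 | h5
  · linarith
  · exact absurd h5 (by simpa using hi)

section graph
variable (a b : ℕ)

local notation "G" => completeBipartiteGraph (Fin a) (Fin b)

lemma dist_lr (i : Fin a) (j : Fin b) : (G).dist (Sum.inl i) (Sum.inr j) = 1 :=
  SimpleGraph.dist_eq_one_iff_adj.mpr (by simp)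

lemma dist_rl (i : Fin b) (j : Fin a) : (G).dist (Sum.inr i) (Sum.inl j) = 1 :=
  SimpleGraph.dist_eq_one_iff_adj.mpr (by simp)

lemma dist_ll (hb : 1 ≤ b) {i j : Fin a} (hij : i ≠ j) :
    (G).dist (Sum.inl i) (Sum.inl j) = 2 := by
  have k : Fin b := ⟨0, hb⟩
  have h1 : (G).Adj (Sum.inl i) (Sum.inr k) := by simp
  have h2 : (G).Adj (Sum.inr k) (Sum.inl j) := by simp
  have hle : (G).dist (Sum.inl i) (Sum.inl j) ≤ 2 := by
    have := SimpleGraph.dist_le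
      (SimpleGraph.Walk.cons h1 (SimpleGraph.Walk.cons h2 SimpleGraph.Walk.nil))
    simpa using this
  have hne0 : (G).dist (Sum.inl i) (Sum.inl j) ≠ 0 := by
    intro h0
    rw [SimpleGraph.dist_eq_zero_iff_eq_or_not_reachable] at h0
    rcases h0 with h0 | h0
    · exact hij (by simpa using h0)
    · exact h0 ⟨(SimpleGraph.Walk.cons h1 (SimpleGraph.Walk.cons h2 SimpleGraph.Walk.nil))⟩
  have hne1 : (G).dist (Sum.inl i) (Sum.inl j) ≠ 1 := by
    intro h0
    have := SimpleGraph.dist_eq_one_iff_adj.mp h0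
    simp at this
  omega

lemma dist_rr (ha : 1 ≤ a) {i j : Fin b} (hij : i ≠ j) :
    (G).dist (Sum.inr i) (Sum.inr j) = 2 := by
  have k : Fin a := ⟨0, ha⟩
  have h1 : (G).Adj (Sum.inr i) (Sum.inl k) := by simp
  have h2 : (G).Adj (Sum.inl k) (Sum.inr j) := by simp
  have hle : (G).dist (Sum.inr i) (Sum.inr j) ≤ 2 := by
    have := SimpleGraph.dist_le
      (SimpleGraph.Walk.cons h1 (SimpleGraph.Walk.cons h2 SimpleGraph.Walk.nil))
    simpa using this
  have hne0 : (G).dist (Sum.inr i) (Sum.inr j) ≠ 0 := by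
    intro h0
    rw [SimpleGraph.dist_eq_zero_iff_eq_or_not_reachable] at h0
    rcases h0 with h0 | h0
    · exact hij (by simpa using h0)
    · exact h0 ⟨(SimpleGraph.Walk.cons h1 (SimpleGraph.Walk.cons h2 SimpleGraph.Walk.nil))⟩
  have hne1 : (G).dist (Sum.inr i) (Sum.inr j) ≠ 1 := by
    intro h0
    have := SimpleGraph.dist_eq_one_iff_adj.mp h0
    simp at this
  omega

lemma distA (hb : 1 ≤ b) (i j : Fin a) :
    ((G).dist (Sum.inl i) (Sum.inl j) : ℝ) = 2 - (if j = i then 2 else 0) := by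
  by_cases h : j = i
  · subst h; simp
  · rw [dist_ll a b hb (Ne.symm h)]; simp [h]

lemma distB (ha : 1 ≤ a) (i j : Fin b) :
    ((G).dist (Sum.inr i) (Sum.inr j) : ℝ) = 2 - (if j = i then 2 else 0) := by
  by_cases h : j = i
  · subst h; simp
  · rw [dist_rr a b ha (Ne.symm h)]; simp [h]

lemma transA (hb : 1 ≤ b) (i : Fin a) :
    transmission (G) (Sum.inl i) = 2*(a:ℝ) + b - 2 := by
  rw [transmission, Fintype.sum_sum_type]
  have h1 : ∑ j : Fin a, ((G).dist (Sum.inl i) (Sum.inl j) : ℝ) = 2*(a:ℝ) - 2 := by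
    simp only [distA a b hb i, Finset.sum_sub_distrib, Finset.sum_const,
      Finset.sum_ite_eq', Finset.mem_univ, if_true, Finset.card_univ, Fintype.card_fin]
    ring
  have h2 : ∑ j : Fin b, ((G).dist (Sum.inl i) (Sum.inr j) : ℝ) = (b:ℝ) := by
    simp [dist_lr]
  rw [h1, h2]; ring

lemma transB (ha : 1 ≤ a) (i : Fin b) :
    transmission (G) (Sum.inr i) = (a:ℝ) + 2*b - 2 := by
  rw [transmission, Fintype.sum_sum_type]
  have h1 : ∑ j : Fin b, ((G).dist (Sum.inr i) (Sum.inr j) : ℝ) = 2*(b:ℝ) - 2 := by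
    simp only [distB a b ha i, Finset.sum_sub_distrib, Finset.sum_const,
      Finset.sum_ite_eq', Finset.mem_univ, if_true, Finset.card_univ, Fintype.card_fin]
    ring
  have h2 : ∑ j : Fin a, ((G).dist (Sum.inr i) (Sum.inl j) : ℝ) = (a:ℝ) := by
    simp [dist_rl]
  rw [h1, h2]; ring

lemma rowA (hb : 1 ≤ b) (x : Fin a ⊕ Fin b → ℝ) (i : Fin a) :
    (distSLMatrix (G) *ᵥ x) (Sum.inl i) =
      (2*(a:ℝ) + b - 4) * x (Sum.inl i)
        + 2 * (∑ j, x (Sum.inl j)) + (∑ j, x (Sum.inr j)) := by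
  rw [distSLMatrix, Matrix.add_mulVec, Pi.add_apply, Matrix.mulVec_diagonal, transA a b hb]
  have h3 : (distMatrix (G) *ᵥ x) (Sum.inl i)
      = 2 * (∑ j, x (Sum.inl j)) - 2 * x (Sum.inl i) + (∑ j, x (Sum.inr j)) := by
    rw [Matrix.mulVec, dotProduct, Fintype.sum_sum_type]
    have h1 : ∑ j : Fin a, distMatrix (G) (Sum.inl i) (Sum.inl j) * x (Sum.inl j)
        = 2 * (∑ j, x (Sum.inl j)) - 2 * x (Sum.inl i) := by
      simp only [distMatrix, Matrix.of_apply, distA a b hb i, sub_mul, ite_mul, zero_mul,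
        Finset.sum_sub_distrib, Finset.sum_ite_eq', Finset.mem_univ, if_true]
      rw [← Finset.mul_sum]
    have h2 : ∑ j : Fin b, distMatrix (G) (Sum.inl i) (Sum.inr j) * x (Sum.inr j)
        = ∑ j, x (Sum.inr j) := by
      simp [distMatrix, dist_lr]
    rw [h1, h2]
  rw [h3]; ring

lemma rowB (ha : 1 ≤ a) (x : Fin a ⊕ Fin b → ℝ) (i : Fin b) :
    (distSLMatrix (G) *ᵥ x) (Sum.inr i) =
      ((a:ℝ) + 2*b - 4) * x (Sum.inr i)
        + (∑ j, x (Sum.inl j)) + 2 * (∑ j, x (Sum.inr j)) := by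
  rw [distSLMatrix, Matrix.add_mulVec, Pi.add_apply, Matrix.mulVec_diagonal, transB a b ha]
  have h3 : (distMatrix (G) *ᵥ x) (Sum.inr i)
      = (∑ j, x (Sum.inl j)) + (2 * (∑ j, x (Sum.inr j)) - 2 * x (Sum.inr i)) := by
    rw [Matrix.mulVec, dotProduct, Fintype.sum_sum_type]
    have h1 : ∑ j : Fin b, distMatrix (G) (Sum.inr i) (Sum.inr j) * x (Sum.inr j)
        = 2 * (∑ j, x (Sum.inr j)) - 2 * x (Sum.inr i) := by
      simp only [distMatrix, Matrix.of_apply, distB a b ha i, sub_mul, ite_mul, zero_mul,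
        Finset.sum_sub_distrib, Finset.sum_ite_eq', Finset.mem_univ, if_true]
      rw [← Finset.mul_sum]
    have h2 : ∑ j : Fin a, distMatrix (G) (Sum.inr i) (Sum.inl j) * x (Sum.inl j)
        = ∑ j, x (Sum.inl j) := by
      simp [distMatrix, dist_rl]
    rw [h1, h2]
  rw [h3]; ring

end graph

theorem stmt10 (n a : ℕ) (hn : 4 ≤ n) (ha1 : 1 ≤ a) (ha2 : 2*a ≤ n) :
    maxEig (distSLMatrix_isHermitian (completeBipartiteGraph (Fin a) (Fin (n - a)))) =
      (5*(n : ℝ) - 8 + Real.sqrt (9*(n : ℝ)^2 - 32*a*((n : ℝ) - a))) / 2 := by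
  set b := n - a with hbdef
  have hb1 : 1 ≤ b := by omega
  have hab : a + b = n := by omega
  set A : ℝ := (a:ℝ) with hAdef
  set B : ℝ := (b:ℝ) with hBdef
  have hN : (n:ℝ) = A + B := by rw [← hab]; push_cast; ring
  have hA1 : (1:ℝ) ≤ A := by rw [hAdef]; exact_mod_cast ha1
  have hB1 : (1:ℝ) ≤ B := by rw [hBdef]; exact_mod_cast hb1
  have harg : 9*(n:ℝ)^2 - 32*(a:ℝ)*((n:ℝ) - (a:ℝ)) = 9*(A+B)^2 - 32*A*B := by
    rw [hN]; ring
  rw [harg, hN]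
  have hd0 : (0:ℝ) ≤ 9*(A+B)^2 - 32*A*B := by nlinarith [sq_nonneg (A-B), hA1, hB1]
  set s := Real.sqrt (9*(A+B)^2 - 32*A*B) with hsdef
  have hs : s^2 = 9*(A+B)^2 - 32*A*B := Real.sq_sqrt hd0
  have hs0 : 0 ≤ s := Real.sqrt_nonneg _
  have hsN : A + B ≤ s := by nlinarith [hs, hs0, sq_nonneg (A-B), hA1, hB1]
  set lam := (5*(A+B) - 8 + s)/2 with hlamdef
  haveI : Nonempty (Fin a ⊕ Fin b) := ⟨Sum.inl ⟨0, ha1⟩⟩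
  have hG := distSLMatrix_isHermitian (completeBipartiteGraph (Fin a) (Fin b))
  show maxEig hG = lam
  rw [maxEig]
  have key : ∀ (μ : ℝ) (x : Fin a ⊕ Fin b → ℝ), x ≠ 0 →
      distSLMatrix (completeBipartiteGraph (Fin a) (Fin b)) *ᵥ x = μ • x → μ ≤ lam := by
    intro μ x hx0 hQx
    set S := ∑ j, x (Sum.inl j) with hSdef
    set T := ∑ j, x (Sum.inr j) with hTdef
    have heqA : ∀ i' : Fin a,
        (2*A + B - 4) * x (Sum.inl i') + 2*S + T = μ * x (Sum.inl i') := by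
      intro i'
      have h2 := congrFun hQx (Sum.inl i')
      rw [rowA a b hb1 x i'] at h2
      simpa using h2
    have heqB : ∀ i' : Fin b,
        (A + 2*B - 4) * x (Sum.inr i') + S + 2*T = μ * x (Sum.inr i') := by
      intro i'
      have h2 := congrFun hQx (Sum.inr i')
      rw [rowB a b ha1 x i'] at h2
      simpa using h2
    by_cases hc1 : μ = 2*A + B - 4
    · rw [hc1, hlamdef]; linarith
    by_cases hc2 : μ = A + 2*B - 4
    · rw [hc2, hlamdef]; linarith
    -- constant on parts
    set i0 : Fin a := ⟨0, ha1⟩ with hi0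
    set k0 : Fin b := ⟨0, hb1⟩ with hk0
    set α := x (Sum.inl i0) with hαdef
    set β := x (Sum.inr k0) with hβdef
    have hconstA : ∀ i' : Fin a, x (Sum.inl i') = α := by
      intro i'
      have e1 := heqA i'
      have e2 := heqA i0
      have h5 : (μ - (2*A+B-4)) * (x (Sum.inl i') - α) = 0 := by
        rw [hαdef]; ring_nf; ring_nf at e1 e2; linarith
      rcases mul_eq_zero.mp h5 with h | h
      · exact absurd (by linarith) hc1
      · linarith
    have hconstB : ∀ i' : Fin b, x (Sum.inr i') = β := by
      intro i'
      have e1 := heqB i'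
      have e2 := heqB k0
      have h5 : (μ - (A+2*B-4)) * (x (Sum.inr i') - β) = 0 := by
        rw [hβdef]; ring_nf; ring_nf at e1 e2; linarith
      rcases mul_eq_zero.mp h5 with h | h
      · exact absurd (by linarith) hc2
      · linarith
    have hS : S = A * α := by
      rw [hSdef, Finset.sum_congr rfl (fun j _ => hconstA j)]
      simp [Finset.sum_const, Finset.card_univ, hAdef, mul_comm]
    have hT : T = B * β := by
      rw [hTdef, Finset.sum_congr rfl (fun j _ => hconstB j)]
      simp [Finset.sum_const, Finset.card_univ, hBdef, mul_comm]
    have eq1 : (μ - (4*A + B - 4)) * α = B * β := by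
      have := heqA i0
      rw [hS, hT] at this
      ring_nf; ring_nf at this; linarith
    have eq2 : (μ - (A + 4*B - 4)) * β = A * α := by
      have := heqB k0
      rw [hS, hT] at this
      ring_nf; ring_nf at this; linarith
    have hαβ : α ≠ 0 ∧ β ≠ 0 := by
      by_cases hα : α = 0
      · have hβ : β = 0 := by
          have := eq1
          rw [hα, mul_zero] at this
          have hB0 : B ≠ 0 := by linarith
          field_simp at this
          exact (mul_eq_zero.mp this.symm).resolve_left hB0
        exfalso
        apply hx0
        funext v
        cases v with
        | inl i' => rw [hconstA i', hα]; rfl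
        | inr i' => rw [hconstB i', hβ]; rfl
      · refine ⟨hα, ?_⟩
        intro hβ
        apply hα
        have := eq2
        rw [hβ, mul_zero] at this
        have hA0 : A ≠ 0 := by linarith
        rcases mul_eq_zero.mp (id this.symm) with h | h
        · exact absurd h hA0
        · exact h
    have hq : (μ - (4*A + B - 4)) * (μ - (A + 4*B - 4)) = A * B := by
      have hm : ((μ - (4*A + B - 4)) * α) * ((μ - (A + 4*B - 4)) * β) = (B * β) * (A * α) := by
        rw [eq1, eq2]
      have hne : α * β ≠ 0 := mul_ne_zero hαβ.1 hαβ.2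
      apply mul_right_cancel₀ hne
      ring_nf; ring_nf at hm; linarith
    have hroot : (μ - lam) * (μ - (5*(A+B) - 8 - s)/2) = 0 := by
      rw [hlamdef]
      linear_combination hq - hs/4
    rcases mul_eq_zero.mp hroot with h | h
    · have hμ : μ = lam := by linarith
      exact le_of_eq hμ
    · have hμ : μ = (5*(A+B) - 8 - s)/2 := by linarith
      rw [hμ, hlamdef]; linarith
  apply le_antisymm
  · apply ciSup_le
    intro i
    refine key _ _ ?_ (hG.mulVec_eigenvectorBasis i)
    intro h0
    apply hG.eigenvectorBasis.orthonormal.ne_zero i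
    ext j
    exact congrFun h0 j
  · -- lower bound: lam is an eigenvalue
    set xv : Fin a ⊕ Fin b → ℝ :=
      Sum.elim (fun _ => B) (fun _ => lam - (4*A + B - 4)) with hxvdef
    have hxv0 : xv ≠ 0 := by
      intro h0
      have := congrFun h0 (Sum.inl ⟨0, ha1⟩)
      simp [hxvdef] at this
      linarith
    have hSv : (∑ j : Fin a, xv (Sum.inl j)) = A * B := by
      simp [hxvdef, Finset.sum_const, Finset.card_univ, hAdef, mul_comm]
    have hTv : (∑ j : Fin b, xv (Sum.inr j)) = B * (lam - (4*A + B - 4)) := by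
      simp [hxvdef, Finset.sum_const, Finset.card_univ, hBdef, mul_comm]; ring
    have hQxv : distSLMatrix (completeBipartiteGraph (Fin a) (Fin b)) *ᵥ xv = lam • xv := by
      funext v
      cases v with
      | inl i =>
        rw [rowA a b hb1 xv i, hSv, hTv]
        have h1 : xv (Sum.inl i) = B := rfl
        have h2 : (lam • xv) (Sum.inl i) = lam * B := rfl
        rw [h1, h2]; ring
      | inr k =>
        rw [rowB a b ha1 xv k, hSv, hTv]
        have h1 : xv (Sum.inr k) = lam - (4*A + B - 4) := rfl
        have h2 : (lam • xv) (Sum.inr k) = lam * (lam - (4*A + B - 4)) := rfl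
        rw [h1, h2, hlamdef]
        linear_combination -hs/4
    obtain ⟨i, hi⟩ := exists_eigenvalue_eq hG hxv0 hQxv
    calc lam = hG.eigenvalues i := hi.symm
    _ ≤ ⨆ j, hG.eigenvalues j :=
      le_ciSup (Set.Finite.bddAbove (Set.finite_range _)) i
end
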